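/- arXiv:2507.10279 — 4 statements merged into one kernel-verified Lean document; each statement's English description precedes it below -/
import Mathlib

section
/- Fundamental Theorem of Affine Geometry, field case: let F be a field with more than two elements and let d ≥ 2. A bijection g : F^d → F^d respects the collinearity relation Col (i.e., Col(p,q,r) ↔ Col(g(p),g(q),g(r)) for all p,q,r) if and only if g = A ∘ α̃ for some affine transformation A of F^d and some field automorphism α of F, where α̃ denotes the map acting as α on each coordinate. -/
open FirstOrder

/-- Function symbols of the language of fields `{+, ·, 0, 1}`. -/
inductive FieldFunc : ℕ → Type
  | add : FieldFunc 2
  | mul : FieldFunc 2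
  | zero : FieldFunc 0
  | one : FieldFunc 0

/-- Relation symbols of the language of ordered fields: the ordering `≤`. -/
inductive OrderRel : ℕ → Type
  | le : OrderRel 2

/-- The first-order language of fields `{+, ·, 0, 1}`. -/
def fieldLang : FirstOrder.Language := ⟨FieldFunc, fun _ => Empty⟩

/-- The first-order language of ordered fields `{+, ·, 0, 1, ≤}`. -/
def orderedFieldLang : FirstOrder.Language := ⟨FieldFunc, OrderRel⟩

/-- The interpretation of the field function symbols in a field `F`. -/
def fieldFuncMap {F : Type} [Field F] : ∀ {n}, FieldFunc n → (Fin n → F) → F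
  | _, .add, x => x 0 + x 1
  | _, .mul, x => x 0 * x 1
  | _, .zero, _ => 0
  | _, .one, _ => 1

/-- A field `F` as a structure for the language of fields. -/
def fieldStr (F : Type) [Field F] : fieldLang.Structure F where
  funMap := fieldFuncMap
  RelMap := fun r => r.elim

/-- A linearly ordered field `F` as a structure for the language of ordered fields. -/
def orderedFieldStr (F : Type) [Field F] [LinearOrder F] [IsStrictOrderedRing F] : orderedFieldLang.Structure F where
  funMap := fieldFuncMap
  RelMap := fun r x => match r with | .le => x 0 ≤ x 1

/-- An `n`-ary relation `R` on `F^d` is definable over the field `F` iff its flattening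
(a `d·n`-ary relation on `F`, here indexed by `Fin n × Fin d`) is definable without parameters
by a first-order formula in the language of fields interpreted in `F`. -/
def DefinableOverField (F : Type) [Field F] (d : ℕ) {n : ℕ}
    (R : (Fin n → Fin d → F) → Prop) : Prop :=
  letI := fieldStr F
  ∃ φ : fieldLang.Formula (Fin n × Fin d),
    ∀ p : Fin n → Fin d → F, R p ↔ φ.Realize fun q => p q.1 q.2

/-- An `n`-ary relation `R` on `F^d` is definable over the ordered field `F` iff its flattening
is definable without parameters by a first-order formula in the language of ordered fields
interpreted in `F`. -/
def DefinableOverOrderedField (F : Type) [Field F] [LinearOrder F] [IsStrictOrderedRing F] (d : ℕ) {n : ℕ}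
    (R : (Fin n → Fin d → F) → Prop) : Prop :=
  letI := orderedFieldStr F
  ∃ φ : orderedFieldLang.Formula (Fin n × Fin d),
    ∀ p : Fin n → Fin d → F, R p ↔ φ.Realize fun q => p q.1 q.2

/-- A first-order structure in a purely relational language with universe `P`,
given by an indexed family of relations with their arities. -/
structure RelStruct (P : Type) where
  ι : Type
  arity : ι → ℕ
  rel : ∀ i, (Fin (arity i) → P) → Prop

namespace RelStruct

variable {P : Type}

/-- The purely relational first-order language of `G`. -/
def lang (G : RelStruct P) : FirstOrder.Language :=
  ⟨fun _ => Empty, fun n => { i : G.ι // G.arity i = n }⟩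

/-- `P` as a first-order structure for the language of `G`. -/
def str (G : RelStruct P) : G.lang.Structure P where
  funMap := fun f => f.elim
  RelMap := fun r x => G.rel r.1 fun j => x (Fin.cast r.2 j)

/-- A relation is a *concept* of `G` iff it is definable in `G` without parameters. -/
def Concept (G : RelStruct P) {n : ℕ} (R : (Fin n → P) → Prop) : Prop :=
  letI := G.str
  ∃ φ : G.lang.Formula (Fin n), ∀ a : Fin n → P, R a ↔ φ.Realize a

/-- An automorphism of `G` is a bijection of its universe respecting all its relations. -/
def IsAut (G : RelStruct P) (g : P → P) : Prop :=
  Function.Bijective g ∧ ∀ i (a : Fin (G.arity i) → P), G.rel i a ↔ G.rel i (g ∘ a)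

/-- The set of all concepts (of all arities `n ≥ 1`) of `G`. -/
def conceptSet (G : RelStruct P) : Set (Σ n : ℕ, (Fin n → P) → Prop) :=
  { R | 1 ≤ R.1 ∧ G.Concept R.2 }

/-- The set of automorphisms of `G`. -/
def autSet (G : RelStruct P) : Set (P → P) := { g | G.IsAut g }

end RelStruct

/-- An affine transformation of `F^d`: a composition of a linear bijection with a translation. -/
def IsAffineTrf (F : Type) [Field F] (d : ℕ) (A : (Fin d → F) → (Fin d → F)) : Prop :=
  ∃ (L : (Fin d → F) ≃ₗ[F] (Fin d → F)) (t : Fin d → F), ∀ p, A p = L p + t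

/-- The set of affine automorphisms of `G`: affine transformations that are automorphisms. -/
def affAutSet (F : Type) [Field F] (d : ℕ) (G : RelStruct (Fin d → F)) :
    Set ((Fin d → F) → (Fin d → F)) :=
  { g | IsAffineTrf F d g ∧ G.IsAut g }

/-- The collinearity relation on `F^d`. -/
def Col {F : Type} [Field F] {d : ℕ} (p q r : Fin d → F) : Prop :=
  r = p ∨ ∃ l : F, q = p + l • (r - p)

/-- Collinearity as a ternary relation in the sense of `RelStruct` concepts. -/
def colRel (F : Type) [Field F] (d : ℕ) : (Fin 3 → Fin d → F) → Prop :=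
  fun a => Col (a 0) (a 1) (a 2)

/-- The betweenness relation on `F^d` over a linearly ordered field. -/
def Bw {F : Type} [Field F] [LinearOrder F] [IsStrictOrderedRing F] {d : ℕ} (p q r : Fin d → F) : Prop :=
  ∃ l : F, 0 ≤ l ∧ l ≤ 1 ∧ q = p + l • (r - p)

/-- Betweenness as a ternary relation in the sense of `RelStruct` concepts. -/
def bwRel (F : Type) [Field F] [LinearOrder F] [IsStrictOrderedRing F] (d : ℕ) : (Fin 3 → Fin d → F) → Prop :=
  fun a => Bw (a 0) (a 1) (a 2)

/-- `R` is closed under a map `g` iff `R(a₁,…,aₙ)` implies `R(g(a₁),…,g(aₙ))`. -/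
def ClosedUnder {P : Type} {n : ℕ} (R : (Fin n → P) → Prop) (g : P → P) : Prop :=
  ∀ a, R a → R (g ∘ a)

/-- The map on `F^d` induced componentwise by a field automorphism `α` of `F`. -/
def indMap {F : Type} [Field F] (α : F ≃+* F) {d : ℕ} : (Fin d → F) → (Fin d → F) :=
  fun p j => α (p j)

set_option linter.unnecessarySimpa false

namespace FTAGaux

variable {F : Type} [Field F] {d : ℕ}

lemma col_iff {p q r : Fin d → F} :
    Col p q r ↔ (r = p ∨ ∃ l : F, q = p + l • (r - p)) := Iff.rfl

lemma col_elim {p q r : Fin d → F} (hc : Col p q r) :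
    r = p ∨ ∃ l : F, q = p + l • (r - p) := hc

lemma col_zero_iff (w q : Fin d → F) :
    Col 0 q w ↔ (w = 0 ∨ ∃ l : F, q = l • w) := by
  simp [col_iff]

/-- Two vectors are "independent": neither is a scalar multiple of the other. -/
def Ind (u v : Fin d → F) : Prop := (∀ c : F, v ≠ c • u) ∧ (∀ c : F, u ≠ c • v)

lemma Ind.symm {u v : Fin d → F} (h : Ind u v) : Ind v u := ⟨h.2, h.1⟩

lemma Ind.left_ne {u v : Fin d → F} (h : Ind u v) : u ≠ 0 := by
  intro h0; exact h.2 0 (by simp [h0])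

lemma Ind.right_ne {u v : Fin d → F} (h : Ind u v) : v ≠ 0 := h.symm.left_ne

lemma Ind.smul_left {u v : Fin d → F} (h : Ind u v) {c : F} (hc : c ≠ 0) :
    Ind (c • u) v := by
  constructor
  · intro a hav
    exact h.1 (a * c) (by rw [hav, mul_smul])
  · intro a hav
    apply h.2 (c⁻¹ * a)
    rw [mul_smul, ← hav, smul_smul, inv_mul_cancel₀ hc, one_smul]

lemma Ind.elim_eq {u v : Fin d → F} (h : Ind u v) {s t : F}
    (he : s • u = t • v) : s = 0 ∧ t = 0 := by
  rcases eq_or_ne s 0 with rfl | hs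
  · refine ⟨rfl, ?_⟩
    rw [zero_smul] at he
    rcases smul_eq_zero.mp he.symm with h1 | h1
    · exact h1
    · exact absurd h1 h.right_ne
  · exact absurd (show u = (s⁻¹ * t) • v by
      rw [mul_smul, ← he, smul_smul, inv_mul_cancel₀ hs, one_smul]) (h.2 _)

lemma ind_iff_col {u v : Fin d → F} :
    Ind u v ↔ ¬ Col 0 v u ∧ ¬ Col 0 u v := by
  rw [col_zero_iff, col_zero_iff]
  push_neg
  constructor
  · exact fun h => ⟨⟨h.left_ne, fun l => h.1 l⟩, ⟨h.right_ne, fun l => h.2 l⟩⟩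
  · rintro ⟨⟨-, hA⟩, ⟨-, hB⟩⟩; exact ⟨hA, hB⟩

lemma Ind.special {z w : Fin d → F} (hzw : Ind z w) {a b : F} (ha : a ≠ 0) :
    Ind (a • z) (b • z + w) := by
  constructor
  · intro c hc
    apply hzw.1 (c * a - b)
    have h1 : w = c • (a • z) - b • z := eq_sub_of_add_eq' hc
    rw [h1, smul_smul, sub_smul]
  · intro c hc
    rcases eq_or_ne c 0 with rfl | hc0
    · rw [zero_smul] at hc
      rcases smul_eq_zero.mp hc with h' | h'
      · exact ha h'
      · exact hzw.left_ne h'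
    · apply hzw.1 (c⁻¹ * (a - c * b))
      rw [smul_add, smul_smul] at hc
      have h2 : c • w = (a - c * b) • z := by
        rw [sub_smul]
        exact eq_sub_of_add_eq' hc.symm
      rw [mul_smul, ← h2, inv_smul_smul₀ hc0]

lemma exists_ne01 {F : Type} [Field F] (hF : 2 < Cardinal.mk F) :
    ∃ μ : F, μ ≠ 0 ∧ μ ≠ 1 := by
  by_contra hcon
  push_neg at hcon
  have hinj : Function.Injective (fun x : F => (x = 0 : Prop)) := by
    intro x y hxy
    have hxy' : (x = 0) = (y = 0) := hxy
    rcases eq_or_ne x 0 with rfl | hx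
    · exact ((iff_of_eq hxy').mp rfl).symm
    · have hy : y ≠ 0 := fun h0 => hx ((iff_of_eq hxy').mpr h0)
      rw [hcon x hx, hcon y hy]
  have hle := Cardinal.mk_le_of_injective hinj
  rw [Cardinal.mk_Prop] at hle
  exact absurd hle (not_le.mpr hF)

lemma exists_ind (hd : 2 ≤ d) {u : Fin d → F} (hu : u ≠ 0) :
    ∃ w : Fin d → F, Ind u w := by
  obtain ⟨i, hi⟩ := Function.ne_iff.mp hu
  have hi' : u i ≠ 0 := hi
  have hnt : Nontrivial (Fin d) :=
    ⟨⟨0, by omega⟩, ⟨1, by omega⟩, by simp [Fin.ext_iff]⟩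
  obtain ⟨j, hj⟩ := exists_ne i
  refine ⟨Pi.single j 1, ⟨?_, ?_⟩⟩
  · intro c hc
    have h1 := congrFun hc i
    rw [Pi.single_apply, if_neg (Ne.symm hj)] at h1
    have hc0 : c = 0 := by
      rcases mul_eq_zero.mp h1.symm with h' | h'
      · exact h'
      · exact absurd h' hi'
    rw [hc0, zero_smul] at hc
    have h2 := congrFun hc j
    rw [Pi.single_eq_same] at h2
    exact (one_ne_zero : (1 : F) ≠ 0) (by simpa using h2)
  · intro c hc
    have h1 := congrFun hc i
    rw [Pi.smul_apply, Pi.single_apply, if_neg (Ne.symm hj)] at h1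
    simp only [smul_eq_mul, mul_zero] at h1
    exact hi' h1

/-- Translation invariance of collinearity. -/
lemma col_sub (t p q r : Fin d → F) :
    Col (p - t) (q - t) (r - t) ↔ Col p q r := by
  constructor
  · intro hc
    rcases col_elim hc with he | ⟨l, hl⟩
    · refine Or.inl ?_
      have := congrArg (· + t) he
      simpa using this
    · refine Or.inr ⟨l, ?_⟩
      rw [sub_sub_sub_cancel_right] at hl
      calc q = q - t + t := by module
      _ = (p - t + l • (r - p)) + t := by rw [hl]
      _ = p + l • (r - p) := by module
  · intro hc
    rcases col_elim hc with he | ⟨l, hl⟩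
    · exact Or.inl (by rw [he])
    · refine Or.inr ⟨l, ?_⟩
      rw [sub_sub_sub_cancel_right, hl]
      module

/-- Componentwise field-automorphism maps preserve collinearity. -/
lemma col_ind_forward (β : F ≃+* F) {p q r : Fin d → F}
    (hc : Col p q r) : Col (indMap β p) (indMap β q) (indMap β r) := by
  rcases col_elim hc with he | ⟨l, hl⟩
  · exact Or.inl (by rw [he])
  · refine Or.inr ⟨β l, ?_⟩
    funext j
    rw [hl]
    simp [indMap, Pi.add_apply, Pi.smul_apply, Pi.sub_apply, smul_eq_mul,
      map_add, map_mul, map_sub]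

lemma col_ind (β : F ≃+* F) (p q r : Fin d → F) :
    Col p q r ↔ Col (indMap β p) (indMap β q) (indMap β r) := by
  constructor
  · exact col_ind_forward β
  · intro hc
    have h2 := col_ind_forward β.symm hc
    have he : ∀ x : Fin d → F, indMap β.symm (indMap β x) = x := by
      intro x; funext j
      exact β.symm_apply_apply (x j)
    rwa [he, he, he] at h2

/-- Invertible affine maps preserve collinearity. -/
lemma col_affine (L : (Fin d → F) ≃ₗ[F] (Fin d → F)) (t : Fin d → F)
    (p q r : Fin d → F) :
    Col p q r ↔ Col (L p + t) (L q + t) (L r + t) := by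
  constructor
  · intro hc
    rcases col_elim hc with he | ⟨l, hl⟩
    · exact Or.inl (by rw [he])
    · refine Or.inr ⟨l, ?_⟩
      rw [hl, map_add, map_smul, map_sub]
      module
  · intro hc
    rcases col_elim hc with he | ⟨l, hl⟩
    · refine Or.inl (L.injective (add_right_cancel he))
    · refine Or.inr ⟨l, ?_⟩
      apply L.injective
      rw [map_add, map_smul, map_sub]
      have h3 : L q + t = (L p + l • (L r - L p)) + t := by
        rw [hl]; module
      exact add_right_cancel h3

/-- A bijection fixing `0` and respecting collinearity both ways. -/
structure GoodMap (h : (Fin d → F) → (Fin d → F)) : Prop where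
  bij : Function.Bijective h
  zero : h 0 = 0
  col : ∀ p q r, Col p q r ↔ Col (h p) (h q) (h r)

namespace GoodMap

variable {h : (Fin d → F) → (Fin d → F)}

lemma inj (H : GoodMap h) : Function.Injective h := H.bij.injective

lemma ne_zero (H : GoodMap h) {u : Fin d → F} (hu : u ≠ 0) : h u ≠ 0 :=
  fun he => hu (H.inj (he.trans H.zero.symm))

lemma line1 (H : GoodMap h) {u : Fin d → F} (hu : u ≠ 0) (s : F) :
    ∃ t : F, h (s • u) = t • h u := by
  have hc : Col 0 (s • u) u := Or.inr ⟨s, by simp⟩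
  have h2 := (H.col 0 (s • u) u).1 hc
  rw [H.zero] at h2
  rcases col_elim h2 with he | ⟨l, hl⟩
  · exact absurd he (H.ne_zero hu)
  · exact ⟨l, by simpa using hl⟩

lemma line2 (H : GoodMap h) {u : Fin d → F} (hu : u ≠ 0) (t : F) :
    ∃ s : F, h (s • u) = t • h u := by
  obtain ⟨q, hq⟩ := H.bij.surjective (t • h u)
  have hc : Col (h 0) (h q) (h u) := by
    rw [H.zero, hq]
    exact Or.inr ⟨t, by simp⟩
  rcases col_elim ((H.col 0 q u).2 hc) with he | ⟨l, hl⟩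
  · exact absurd he hu
  · refine ⟨l, ?_⟩
    rw [show l • u = q from by simpa using hl.symm, hq]

lemma line3 (H : GoodMap h) {p q r : Fin d → F} (hpr : r ≠ p) (hcol : Col p q r) :
    ∃ l : F, h q = h p + l • (h r - h p) := by
  rcases col_elim ((H.col p q r).1 hcol) with he | hl
  · exact absurd (H.inj he) hpr
  · exact hl

lemma ind_map (H : GoodMap h) {u v : Fin d → F} (huv : Ind u v) :
    Ind (h u) (h v) := by
  rw [ind_iff_col] at huv ⊢
  constructor
  · intro hc
    exact huv.1 ((H.col 0 v u).2 (by rwa [H.zero]))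
  · intro hc
    exact huv.2 ((H.col 0 u v).2 (by rwa [H.zero]))

lemma plane (H : GoodMap h) {u v : Fin d → F} (huv : Ind u v) {μ : F}
    (hμ0 : μ ≠ 0) (hμ1 : μ ≠ 1) (s t : F) :
    ∃ a b : F, h (s • u + t • v) = a • h u + b • h v := by
  have h1μ : (1 : F) - μ ≠ 0 := sub_ne_zero.mpr (Ne.symm hμ1)
  have hc : (1 - μ) * ((1 - μ)⁻¹ * s) = s := by
    rw [← mul_assoc, mul_inv_cancel₀ h1μ, one_mul]
  have he : μ * (μ⁻¹ * t) = t := by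
    rw [← mul_assoc, mul_inv_cancel₀ hμ0, one_mul]
  have key : ∀ c e : F, (1 - μ) * c = s → μ * e = t →
      c • u + μ • (e • v - c • u) = s • u + t • v := by
    intro c e h1 h2
    rw [← h1, ← h2]
    module
  have hw := key _ _ hc he
  obtain ⟨a, ha⟩ := H.line1 huv.left_ne ((1 - μ)⁻¹ * s)
  by_cases hxy : ((1 - μ)⁻¹ * s) • u = (μ⁻¹ * t) • v
  · refine ⟨a, 0, ?_⟩
    have h2 : s • u + t • v = ((1 - μ)⁻¹ * s) • u := by
      rw [← hw, ← hxy, sub_self, smul_zero, add_zero]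
    rw [h2, ha, zero_smul, add_zero]
  · have hcol : Col (((1 - μ)⁻¹ * s) • u) (s • u + t • v) ((μ⁻¹ * t) • v) :=
      Or.inr ⟨μ, hw.symm⟩
    obtain ⟨l, hl⟩ := H.line3 (fun hh => hxy hh.symm) hcol
    obtain ⟨b, hbv⟩ := H.line1 huv.right_ne (μ⁻¹ * t)
    refine ⟨a - l * a, l * b, ?_⟩
    rw [hl, ha, hbv]
    module

lemma par (H : GoodMap h) {u v : Fin d → F} (huv : Ind u v) {μ : F}
    (hμ0 : μ ≠ 0) (hμ1 : μ ≠ 1) :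
    ∃ c : F, h (u + v) = c • h u + h v := by
  obtain ⟨a, b, hab⟩ := H.plane huv hμ0 hμ1 1 1
  rw [one_smul, one_smul] at hab
  by_cases hb1 : b = 1
  · exact ⟨a, by rw [hab, hb1, one_smul]⟩
  exfalso
  have hb0 : (1 : F) - b ≠ 0 := sub_ne_zero.mpr (Ne.symm hb1)
  have e2 : (1 - b)⁻¹ * (b - 1) = -1 := by
    rw [← neg_sub 1 b, mul_neg, inv_mul_cancel₀ hb0]
  obtain ⟨s0, hs0⟩ := H.line2 huv.left_ne ((1 - b)⁻¹ * a)
  have hkey : h (s0 • u) = h v + (1 - b)⁻¹ • (h (u + v) - h v) := by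
    rw [hs0, hab]
    rw [show a • h u + b • h v - h v = a • h u + (b - 1) • h v by module]
    rw [smul_add, smul_smul, smul_smul, e2]
    module
  have hcol2 : Col (h v) (h (s0 • u)) (h (u + v)) := Or.inr ⟨(1 - b)⁻¹, hkey⟩
  have hcol3 := (H.col v (s0 • u) (u + v)).2 hcol2
  rcases col_elim hcol3 with he | ⟨l, hl⟩
  · exact huv.left_ne (by
      have := congrArg (· - v) he
      simpa using this)
  · rw [add_sub_cancel_right] at hl
    exact huv.1 (s0 - l) (by rw [sub_smul, hl]; module)

lemma add_ind (H : GoodMap h) {u v : Fin d → F} (huv : Ind u v) {μ : F}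
    (hμ0 : μ ≠ 0) (hμ1 : μ ≠ 1) :
    h (u + v) = h u + h v := by
  obtain ⟨c, hc⟩ := H.par huv hμ0 hμ1
  obtain ⟨c', hc'⟩ := H.par huv.symm hμ0 hμ1
  rw [add_comm v u] at hc'
  have key : (c - 1) • h u = (c' - 1) • h v := by
    rw [sub_smul, sub_smul, one_smul, one_smul, sub_eq_sub_iff_add_eq_add]
    exact hc.symm.trans hc'
  obtain ⟨e1, e2⟩ := (H.ind_map huv).elim_eq key
  rw [hc, sub_eq_zero.mp e1, one_smul]

lemma hadd (H : GoodMap h) (hd : 2 ≤ d) {μ : F} (hμ0 : μ ≠ 0) (hμ1 : μ ≠ 1) :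
    ∀ x y : Fin d → F, h (x + y) = h x + h y := by
  intro x y
  rcases eq_or_ne x 0 with rfl | hx
  · rw [zero_add, H.zero, zero_add]
  rcases eq_or_ne y 0 with rfl | hy
  · rw [add_zero, H.zero, add_zero]
  by_cases hxy : Ind x y
  · exact H.add_ind hxy hμ0 hμ1
  obtain ⟨z, a, b, hz, ha, hb, rfl, rfl⟩ :
      ∃ (z : Fin d → F) (a b : F), z ≠ 0 ∧ a ≠ 0 ∧ b ≠ 0 ∧ x = a • z ∧ y = b • z := by
    rcases not_and_or.mp hxy with hA | hB
    · push_neg at hA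
      obtain ⟨c, hc⟩ := hA
      exact ⟨x, 1, c, hx, one_ne_zero, fun h0 => hy (by rw [hc, h0, zero_smul]),
        (one_smul F x).symm, hc⟩
    · push_neg at hB
      obtain ⟨c, hc⟩ := hB
      exact ⟨y, c, 1, hy, fun h0 => hx (by rw [hc, h0, zero_smul]), one_ne_zero,
        hc, (one_smul F y).symm⟩
  obtain ⟨w, hw⟩ := exists_ind hd hz
  have h2 : h (b • z + w) = h (b • z) + h w := H.add_ind (hw.smul_left hb) hμ0 hμ1
  have h3 : h (a • z + (b • z + w)) = h (a • z) + h (b • z + w) :=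
    H.add_ind (hw.special ha) hμ0 hμ1
  rcases eq_or_ne (a + b) 0 with hab | hab
  · have hsum : a • z + b • z = 0 := by rw [← add_smul, hab, zero_smul]
    have h4 : a • z + (b • z + w) = w := by rw [← add_assoc, hsum, zero_add]
    rw [h4, h2] at h3
    rw [hsum, H.zero]
    have h5 : h w = (h (a • z) + h (b • z)) + h w := by rw [add_assoc]; exact h3
    simpa using congrArg (· - h w) h5
  · have h5 : Ind (a • z + b • z) w := by
      rw [← add_smul]; exact hw.smul_left hab
    have h6 : h ((a • z + b • z) + w) = h (a • z + b • z) + h w :=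
      H.add_ind h5 hμ0 hμ1
    rw [add_assoc, h3, h2] at h6
    have h7 : (h (a • z) + h (b • z)) + h w = h (a • z + b • z) + h w := by
      rw [add_assoc]; exact h6
    exact (add_right_cancel h7).symm

lemma alpha_step (H : GoodMap h) (hd : 2 ≤ d) {μ : F} (hμ0 : μ ≠ 0) (hμ1 : μ ≠ 1)
    {p q : Fin d → F} (hpq : Ind p q) {c tp tq : F}
    (hp : h (c • p) = tp • h p) (hq : h (c • q) = tq • h q) : tp = tq := by
  have hpq0 : p + q ≠ 0 := by
    intro he
    have hq' : q = -p := eq_neg_of_add_eq_zero_right he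
    exact hpq.1 (-1) (by rw [hq', neg_smul, one_smul])
  obtain ⟨t, ht⟩ := H.line1 hpq0 c
  have e1 : h (c • (p + q)) = tp • h p + tq • h q := by
    rw [smul_add, H.hadd hd hμ0 hμ1, hp, hq]
  have e2 : h (c • (p + q)) = t • h p + t • h q := by
    rw [ht, H.hadd hd hμ0 hμ1, smul_add]
  have e3 : (tp - t) • h p = (t - tq) • h q := by
    rw [sub_smul, sub_smul, sub_eq_sub_iff_add_eq_add]
    exact (e1.symm.trans e2).trans (add_comm _ _)
  obtain ⟨g1, g2⟩ := (H.ind_map hpq).elim_eq e3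
  exact (sub_eq_zero.mp g1).trans (sub_eq_zero.mp g2)

lemma alpha_global (H : GoodMap h) (hd : 2 ≤ d) {μ : F} (hμ0 : μ ≠ 0)
    (hμ1 : μ ≠ 1) {u x : Fin d → F} (hu : u ≠ 0) (hx : x ≠ 0) {c t t' : F}
    (h1 : h (c • u) = t • h u) (h2 : h (c • x) = t' • h x) : t = t' := by
  by_cases hind : Ind u x
  · exact H.alpha_step hd hμ0 hμ1 hind h1 h2
  · obtain ⟨e, he0, rfl⟩ : ∃ e : F, e ≠ 0 ∧ x = e • u := by
      rcases not_and_or.mp hind with hA | hB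
      · push_neg at hA
        obtain ⟨c', hc'⟩ := hA
        exact ⟨c', fun h0 => hx (by rw [hc', h0, zero_smul]), hc'⟩
      · push_neg at hB
        obtain ⟨c', hc'⟩ := hB
        have hc0 : c' ≠ 0 := fun h0 => hu (by rw [hc', h0, zero_smul])
        exact ⟨c'⁻¹, inv_ne_zero hc0,
          by rw [hc', smul_smul, inv_mul_cancel₀ hc0, one_smul]⟩
    obtain ⟨z, hz⟩ := exists_ind hd hu
    obtain ⟨s, hs⟩ := H.line1 hz.right_ne c
    have e1 : t = s := H.alpha_step hd hμ0 hμ1 hz h1 hs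
    have e2 : t' = s := H.alpha_step hd hμ0 hμ1 (hz.smul_left he0) h2 hs
    rw [e1, e2]

end GoodMap

end FTAGaux

/-- **Fundamental Theorem of Affine Geometry (field case).** Over a field `F` with more than two
elements and `d ≥ 2`, a bijection `g` of `F^d` respects collinearity iff `g = A ∘ α̃` for some
affine transformation `A` of `F^d` and some field automorphism `α` of `F`. -/
theorem fundamental_theorem_affine_geometry_field
    (F : Type) [Field F] (hF : 2 < Cardinal.mk F) (d : ℕ) (hd : 2 ≤ d)
    (g : (Fin d → F) → (Fin d → F)) (hg : Function.Bijective g) :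
    (∀ p q r : Fin d → F, Col p q r ↔ Col (g p) (g q) (g r)) ↔
      ∃ (A : (Fin d → F) → (Fin d → F)) (α : F ≃+* F),
        IsAffineTrf F d A ∧ g = A ∘ indMap α := by
  constructor
  · intro hgC
    obtain ⟨μ, hμ0, hμ1⟩ := FTAGaux.exists_ne01 hF
    classical
    set h : (Fin d → F) → (Fin d → F) := fun p => g p - g 0 with hh
    have H : FTAGaux.GoodMap h := by
      refine ⟨?_, by simp [hh], ?_⟩
      · exact (Equiv.subRight (g 0)).bijective.comp hg
      · intro p q r
        exact (hgC p q r).trans (FTAGaux.col_sub (g 0) (g p) (g q) (g r)).symm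
    have hd0 : 0 < d := by omega
    set i0 : Fin d := ⟨0, hd0⟩ with hi0
    set u0 : Fin d → F := Pi.single i0 1 with hu0def
    have hu0 : u0 ≠ 0 := by
      intro he
      exact (one_ne_zero : (1 : F) ≠ 0) (by simpa [hu0def] using congrFun he i0)
    have hhu0 : h u0 ≠ 0 := H.ne_zero hu0
    choose α hα using H.line1 hu0
    have hadd := H.hadd hd hμ0 hμ1
    have scal_cancel : ∀ {t t' : F}, t • h u0 = t' • h u0 → t = t' := by
      intro t t' he
      have h2 : (t - t') • h u0 = 0 := by rw [sub_smul, he, sub_self]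
      rcases smul_eq_zero.mp h2 with h' | h'
      · exact sub_eq_zero.mp h'
      · exact absurd h' hhu0
    have semilin : ∀ (c : F) (x : Fin d → F), h (c • x) = α c • h x := by
      intro c x
      rcases eq_or_ne x 0 with rfl | hx
      · rw [smul_zero, H.zero, smul_zero]
      · obtain ⟨t, ht⟩ := H.line1 hx c
        rw [ht, H.alpha_global hd hμ0 hμ1 hu0 hx (hα c) ht]
    have hone : α 1 = 1 := scal_cancel (by rw [← hα 1, one_smul, one_smul])
    have hzero : α 0 = 0 :=
      scal_cancel (by rw [← hα 0, zero_smul, zero_smul, H.zero])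
    have haddα : ∀ a b : F, α (a + b) = α a + α b := by
      intro a b
      apply scal_cancel
      rw [add_smul (α a) (α b), ← hα (a + b), add_smul, hadd, hα, hα]
    have hmulα : ∀ a b : F, α (a * b) = α a * α b := by
      intro a b
      apply scal_cancel
      rw [mul_smul (α a) (α b), ← hα (a * b), mul_smul, semilin, hα]
    have hαinj : Function.Injective α := by
      intro a b hab
      have h1 : h (a • u0) = h (b • u0) := by rw [hα, hα, hab]
      have h2 := H.inj h1
      have h3 := congrFun h2 i0
      simpa [hu0def, Pi.single_eq_same] using h3
    have hαsurj : Function.Surjective α := by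
      intro t
      obtain ⟨s, hs⟩ := H.line2 hu0 t
      exact ⟨s, scal_cancel (by rw [← hα s, hs])⟩
    set φ : F →+* F :=
      { toFun := α, map_one' := hone, map_mul' := hmulα,
        map_zero' := hzero, map_add' := haddα } with hφ
    set β : F ≃+* F := RingEquiv.ofBijective φ ⟨hαinj, hαsurj⟩ with hβ
    have hβapp : ∀ c : F, β c = α c := fun c => rfl
    have hβsymm : ∀ c : F, β (β.symm c) = c := fun c => β.apply_symm_apply c
    have hIadd : ∀ x y : Fin d → F,
        indMap β.symm (x + y) = indMap β.symm x + indMap β.symm y := by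
      intro x y; funext j
      simp [indMap, map_add]
    have hIsmul : ∀ (c : F) (x : Fin d → F),
        indMap β.symm (c • x) = β.symm c • indMap β.symm x := by
      intro c x; funext j
      simp [indMap, Pi.smul_apply, smul_eq_mul, map_mul]
    have hbijsym : Function.Bijective (indMap β.symm (d := d)) := by
      constructor
      · intro p q hpq
        funext j
        exact β.symm.injective (congrFun hpq j)
      · intro p
        exact ⟨indMap β p, funext fun j => β.symm_apply_apply (p j)⟩
    set Lmap : (Fin d → F) →ₗ[F] (Fin d → F) :=
      { toFun := fun x => h (indMap β.symm x)
        map_add' := by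
          intro x y
          show h (indMap β.symm (x + y)) = h (indMap β.symm x) + h (indMap β.symm y)
          rw [hIadd]
          exact hadd _ _
        map_smul' := by
          intro c x
          show h (indMap β.symm (c • x)) = (RingHom.id F) c • h (indMap β.symm x)
          simp only [RingHom.id_apply]
          rw [hIsmul, semilin, ← hβapp, hβsymm] } with hLmap
    have hLbij : Function.Bijective Lmap := H.bij.comp hbijsym
    refine ⟨fun p => LinearEquiv.ofBijective Lmap hLbij p + g 0, β,
      ⟨LinearEquiv.ofBijective Lmap hLbij, g 0, fun p => rfl⟩, ?_⟩
    funext p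
    show g p = LinearEquiv.ofBijective Lmap hLbij (indMap β p) + g 0
    have e1 : LinearEquiv.ofBijective Lmap hLbij (indMap β p) = h p := by
      show h (indMap β.symm (indMap β p)) = h p
      have e0 : indMap β.symm (indMap β p) = p :=
        funext fun j => β.symm_apply_apply (p j)
      rw [e0]
    rw [e1]
    simp only [hh]
    abel
  · rintro ⟨A, β, ⟨L, t, hA⟩, rfl⟩
    intro p q r
    show Col p q r ↔ Col (A (indMap β p)) (A (indMap β q)) (A (indMap β r))
    rw [hA, hA, hA]
    exact (FTAGaux.col_ind β p q r).trans (FTAGaux.col_affine L t _ _ _)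
end

section
/- Fundamental Theorem of Affine Geometry, ordered case: let F be a linearly ordered field and let d ≥ 2. A bijection g : F^d → F^d respects the betweenness relation Bw (i.e., Bw(p,q,r) ↔ Bw(g(p),g(q),g(r)) for all p,q,r) if and only if g = A ∘ α̃ for some affine transformation A of F^d and some automorphism α of the ordered field F (a field automorphism of F that preserves the order ≤), where α̃ denotes the map acting as α on each coordinate. -/
open FirstOrder

section AuxFTAG
variable {F : Type} [Field F] [LinearOrder F] [IsStrictOrderedRing F] {d : ℕ}

private lemma smul_cancel_vec {v : Fin d → F} (hv : v ≠ 0) {a b : F}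
    (h : a • v = b • v) : a = b := by
  obtain ⟨j, hj⟩ := Function.ne_iff.mp hv
  have h2 := congrFun h j
  simp only [Pi.smul_apply, smul_eq_mul] at h2
  exact mul_right_cancel₀ (by simpa using hj) h2

private lemma col_zero_iff {x y : Fin d → F} : Col 0 x y ↔ y = 0 ∨ ∃ l : F, x = l • y := by
  unfold Col
  simp

private lemma bw_translate (c p q r : Fin d → F) : Bw (p + c) (q + c) (r + c) ↔ Bw p q r := by
  unfold Bw
  have key : ∀ l : F, p + c + l • (r + c - (p + c)) = (p + l • (r - p)) + c := by
    intro l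
    funext j
    simp only [Pi.add_apply, Pi.sub_apply, Pi.smul_apply, smul_eq_mul]
    ring
  constructor <;> rintro ⟨l, h0, h1, hq⟩ <;> refine ⟨l, h0, h1, ?_⟩
  · rw [key] at hq
    exact add_right_cancel hq
  · rw [key, hq]

private lemma col_iff_bw (p q r : Fin d → F) :
    Col p q r ↔ Bw p q r ∨ Bw q p r ∨ Bw p r q := by
  constructor
  · rintro (hrp | ⟨l, hq⟩)
    · refine Or.inr (Or.inr ⟨0, le_refl _, zero_le_one, ?_⟩)
      rw [hrp]; simp
    · rcases le_or_gt 0 l with hl0 | hl0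
      · rcases le_or_gt l 1 with hl1 | hl1
        · exact Or.inl ⟨l, hl0, hl1, hq⟩
        · -- l > 1 : Bw p r q
          have hlne : l ≠ 0 := by positivity
          refine Or.inr (Or.inr ⟨l⁻¹, by positivity, inv_le_one_of_one_le₀ hl1.le, ?_⟩)
          rw [hq, add_sub_cancel_left, smul_smul, inv_mul_cancel₀ hlne, one_smul]
          abel
      · -- l < 0 : Bw q p r
        have hne : l - 1 < 0 := by linarith
        refine Or.inr (Or.inl ⟨l / (l - 1), ?_, ?_, ?_⟩)
        · exact le_of_lt (div_pos_of_neg_of_neg hl0 hne)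
        · rw [div_le_one_iff]
          exact Or.inr (Or.inr ⟨hne, by linarith⟩)
        · rw [hq]
          have hd' : r - (p + l • (r - p)) = (1 - l) • (r - p) := by
            rw [sub_smul, one_smul]; abel
          rw [hd', smul_smul]
          have hc : l / (l - 1) * (1 - l) = -l := by
            rw [div_mul_eq_mul_div, div_eq_iff (ne_of_lt hne)]
            ring
          rw [hc]
          funext j
          simp only [Pi.add_apply, Pi.smul_apply, Pi.sub_apply, smul_eq_mul, neg_mul, Pi.neg_apply]
          ring
  · rintro (⟨l, _, _, hq⟩ | ⟨l, _, hl1, hp⟩ | ⟨l, _, _, hr⟩)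
    · exact Or.inr ⟨l, hq⟩
    · -- p = q + l • (r - q)
      by_cases hl : l = 1
      · left
        subst hl
        rw [one_smul] at hp
        have : p = r := by rw [hp]; abel
        exact this.symm
      · right
        have hne : (1 : F) - l ≠ 0 := by
          intro h; apply hl; linarith [sub_eq_zero.mp h]
        refine ⟨-l / (1 - l), ?_⟩
        have h2 : (1 - l) • q = (1 - l) • p + (-l) • (r - p) := by
          funext j
          have hj := congrFun hp j
          simp only [Pi.add_apply, Pi.smul_apply, Pi.sub_apply, smul_eq_mul,
            neg_mul, Pi.neg_apply] at hj ⊢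
          linear_combination (-1 : F) * hj
        refine smul_right_injective (Fin d → F) hne ?_
        show (1 - l) • q = (1 - l) • (p + (-l / (1 - l)) • (r - p))
        have hc : (1 - l) * (-l / (1 - l)) = -l := by field_simp
        rw [smul_add, smul_smul, hc]
        exact h2
    · -- r = p + l • (q - p)
      by_cases hl : l = 0
      · left; rw [hr, hl]; simp
      · right
        refine ⟨l⁻¹, ?_⟩
        rw [hr, add_sub_cancel_left, smul_smul, inv_mul_cancel₀ hl, one_smul]
        abel

end AuxFTAG

section AuxFTAG2
variable {F : Type} [Field F] [LinearOrder F] [IsStrictOrderedRing F] {d : ℕ} {f : (Fin d → F) → (Fin d → F)}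

private lemma fne0 (hinj : Function.Injective f) (h0 : f 0 = 0) {x : Fin d → F}
    (hx : x ≠ 0) : f x ≠ 0 := fun h => hx (hinj (h.trans h0.symm))

private lemma coeff_zero {u v : Fin d → F} (h : ¬ Col 0 u v) {a b : F}
    (hab : a • u = b • v) : a = 0 ∧ b = 0 := by
  have hv : v ≠ 0 := fun hv => h (col_zero_iff.mpr (Or.inl hv))
  have ha : a = 0 := by
    by_contra ha
    apply h
    refine col_zero_iff.mpr (Or.inr ⟨a⁻¹ * b, ?_⟩)
    rw [mul_smul, ← hab, smul_smul, inv_mul_cancel₀ ha, one_smul]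
  refine ⟨ha, ?_⟩
  rw [ha, zero_smul] at hab
  rcases smul_eq_zero.mp hab.symm with hb | hv'
  · exact hb
  · exact absurd hv' hv

private lemma ncol_symm {x y : Fin d → F} (hx : x ≠ 0) (h : ¬ Col 0 x y) :
    ¬ Col 0 y x := by
  intro hc
  rcases col_zero_iff.mp hc with h1 | ⟨l, hl⟩
  · exact hx h1
  · have hl0 : l ≠ 0 := by
      rintro rfl; rw [zero_smul] at hl
      exact h (col_zero_iff.mpr (Or.inl hl))
    exact h (col_zero_iff.mpr
      (Or.inr ⟨l⁻¹, by rw [hl, smul_smul, inv_mul_cancel₀ hl0, one_smul]⟩))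

private lemma ncol_f (h0 : f 0 = 0)
    (hC : ∀ p q r, Col p q r ↔ Col (f p) (f q) (f r))
    {x y : Fin d → F} (h : ¬ Col 0 x y) : ¬ Col 0 (f x) (f y) := by
  intro hc
  exact h ((hC 0 x y).mpr (by rwa [h0]))

private lemma add_of_indep (hbij : Function.Bijective f) (h0 : f 0 = 0)
    (hC : ∀ p q r, Col p q r ↔ Col (f p) (f q) (f r))
    {x y : Fin d → F} (hxy : ¬ Col 0 x y) : f (x + y) = f x + f y := by
  have hy0 : y ≠ 0 := fun h => hxy (col_zero_iff.mpr (Or.inl h))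
  have hx0 : x ≠ 0 := fun h => hxy (col_zero_iff.mpr (Or.inr ⟨0, by rw [h, zero_smul]⟩))
  have hfx0 : f x ≠ 0 := fne0 hbij.1 h0 hx0
  have hfy0 : f y ≠ 0 := fne0 hbij.1 h0 hy0
  -- step 1 : f (x+y) lies in the span of f x and f y
  have hne2 : (2 : F) • x ≠ (2 : F) • y := by
    intro h
    have : x = y := smul_right_injective (Fin d → F) (two_ne_zero) h
    exact hxy (col_zero_iff.mpr (Or.inr ⟨1, by rw [this, one_smul]⟩))
  have hcolmid : Col ((2:F) • x) (x + y) ((2:F) • y) := by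
    refine Or.inr ⟨1/2, ?_⟩
    funext j
    simp only [Pi.add_apply, Pi.smul_apply, Pi.sub_apply, smul_eq_mul]
    ring
  have hc1 : ∃ c : F, f ((2:F) • x) = c • f x := by
    have h1 : Col 0 ((2:F) • x) x := col_zero_iff.mpr (Or.inr ⟨2, rfl⟩)
    have h2 := (hC 0 ((2:F) • x) x).mp h1
    rw [h0] at h2
    rcases col_zero_iff.mp h2 with h3 | h3
    · exact absurd h3 hfx0
    · exact h3
  have hc2 : ∃ c : F, f ((2:F) • y) = c • f y := by
    have h1 : Col 0 ((2:F) • y) y := col_zero_iff.mpr (Or.inr ⟨2, rfl⟩)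
    have h2 := (hC 0 ((2:F) • y) y).mp h1
    rw [h0] at h2
    rcases col_zero_iff.mp h2 with h3 | h3
    · exact absurd h3 hfy0
    · exact h3
  obtain ⟨c1, hc1⟩ := hc1
  obtain ⟨c2, hc2⟩ := hc2
  have hfne2 : f ((2:F) • y) ≠ f ((2:F) • x) := fun h => hne2 (hbij.1 h.symm)
  have hplane : ∃ a b : F, f (x + y) = a • f x + b • f y := by
    have hcf := (hC _ _ _).mp hcolmid
    rcases hcf with h1 | ⟨l, hl⟩
    · exact absurd h1 hfne2
    · refine ⟨c1 - l * c1, l * c2, ?_⟩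
      rw [hl, hc1, hc2]
      funext j
      simp only [Pi.add_apply, Pi.smul_apply, Pi.sub_apply, smul_eq_mul]
      ring
  obtain ⟨a, b, hz⟩ := hplane
  -- step 2 : a = 1
  have ha : a = 1 := by
    by_contra hne
    have h1a : (1 : F) - a ≠ 0 := fun h => hne (by linarith [sub_eq_zero.mp h])
    set t : F := (1 - a)⁻¹ with ht
    set w : Fin d → F := f x + t • (f (x + y) - f x) with hw
    have hwy : w = (t * b) • f y := by
      rw [hw, hz, ht]
      funext j
      simp only [Pi.add_apply, Pi.smul_apply, Pi.sub_apply, smul_eq_mul]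
      field_simp
      ring
    obtain ⟨u, hu⟩ := hbij.2 w
    have hColx : Col x u (x + y) :=
      (hC x u (x + y)).mpr (Or.inr ⟨t, by rw [hu]⟩)
    have hCol0 : Col 0 u y := by
      refine (hC 0 u y).mpr ?_
      rw [h0, hu, hwy]
      exact col_zero_iff.mpr (Or.inr ⟨t * b, rfl⟩)
    rcases hColx with h1 | ⟨m, hm⟩
    · exact hy0 (add_eq_left.mp h1)
    · rcases col_zero_iff.mp hCol0 with h1 | ⟨l', hl'⟩
      · exact hy0 h1
      · apply hxy
        have hm' : u = x + m • y := by rwa [add_sub_cancel_left] at hm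
        have heq : x + m • y = l' • y := hm'.symm.trans hl'
        refine col_zero_iff.mpr (Or.inr ⟨l' - m, ?_⟩)
        rw [sub_smul, ← heq]
        abel
  -- step 3 : b = 1
  have hb : b = 1 := by
    by_contra hne
    have h1b : (1 : F) - b ≠ 0 := fun h => hne (by linarith [sub_eq_zero.mp h])
    set t : F := (1 - b)⁻¹ with ht
    set w : Fin d → F := f y + t • (f (x + y) - f y) with hw
    have hwx : w = (t * a) • f x := by
      rw [hw, hz, ht]
      funext j
      simp only [Pi.add_apply, Pi.smul_apply, Pi.sub_apply, smul_eq_mul]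
      field_simp
      ring
    obtain ⟨u, hu⟩ := hbij.2 w
    have hColy : Col y u (x + y) :=
      (hC y u (x + y)).mpr (Or.inr ⟨t, by rw [hu]⟩)
    have hCol0 : Col 0 u x := by
      refine (hC 0 u x).mpr ?_
      rw [h0, hu, hwx]
      exact col_zero_iff.mpr (Or.inr ⟨t * a, rfl⟩)
    rcases hColy with h1 | ⟨m, hm⟩
    · exact hx0 (add_eq_right.mp h1)
    · rcases col_zero_iff.mp hCol0 with h1 | ⟨l', hl'⟩
      · exact hx0 h1
      · apply ncol_symm hx0 hxy
        have hm' : u = y + m • x := by rwa [add_sub_cancel_right] at hm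
        have heq : y + m • x = l' • x := hm'.symm.trans hl'
        refine col_zero_iff.mpr (Or.inr ⟨l' - m, ?_⟩)
        rw [sub_smul, ← heq]
        abel
  rw [hz, ha, hb, one_smul, one_smul]

end AuxFTAG2

section AuxFTAG3
variable {F : Type} [Field F] [LinearOrder F] [IsStrictOrderedRing F] {d : ℕ} {f : (Fin d → F) → (Fin d → F)}

private lemma bw_scal {w : Fin d → F} (hw : w ≠ 0) (t : F) :
    0 ≤ t ↔ Bw 0 (t • w) ((t + 1) • w) := by
  constructor
  · intro ht
    have ht1 : (0:F) < t + 1 := by linarith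
    refine ⟨t / (t + 1), div_nonneg ht ht1.le, ?_, ?_⟩
    · rw [div_le_one ht1]; linarith
    · rw [sub_zero, zero_add, smul_smul, div_mul_cancel₀ _ (ne_of_gt ht1)]
  · rintro ⟨l, hl0, hl1, he⟩
    rw [sub_zero, zero_add, smul_smul] at he
    have ht : t = l * (t + 1) := smul_cancel_vec hw he
    rw [mul_add, mul_one] at ht
    by_contra hneg
    push_neg at hneg
    have h1 : 1 * t ≤ l * t := mul_le_mul_of_nonpos_right hl1 hneg.le
    rw [one_mul] at h1
    have hl0' : l = 0 := le_antisymm (by linarith) hl0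
    rw [hl0', zero_mul] at ht
    linarith

private lemma key (hd : 2 ≤ d)
    (hbij : Function.Bijective f) (h0 : f 0 = 0)
    (hB : ∀ p q r, Bw p q r ↔ Bw (f p) (f q) (f r)) :
    ∃ α : F ≃+* F, (∀ s t : F, s ≤ t ↔ α s ≤ α t) ∧
      (∀ u v, f (u + v) = f u + f v) ∧ (∀ (c : F) v, f (c • v) = α c • f v) := by
  have hC : ∀ p q r, Col p q r ↔ Col (f p) (f q) (f r) := by
    intro p q r
    rw [col_iff_bw p q r, col_iff_bw (f p) (f q) (f r), hB p q r, hB q p r, hB p r q]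
  have hinj := hbij.1
  -- the ratio functions
  have Hex : ∀ x : Fin d → F, x ≠ 0 → ∀ t : F, ∃ l : F, f (t • x) = l • f x := by
    intro x hx t
    have h1 : Col 0 (t • x) x := col_zero_iff.mpr (Or.inr ⟨t, rfl⟩)
    have h2 := (hC 0 (t • x) x).mp h1
    rw [h0] at h2
    rcases col_zero_iff.mp h2 with h3 | h3
    · exact absurd h3 (fne0 hinj h0 hx)
    · exact h3
  choose σ hσ using Hex
  have huniq : ∀ (x : Fin d → F) (hx : x ≠ 0) (t l : F),
      f (t • x) = l • f x → l = σ x hx t := by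
    intro x hx t l h
    exact smul_cancel_vec (fne0 hinj h0 hx) (h.symm.trans (hσ x hx t))
  have hσ0 : ∀ (x : Fin d → F) (hx : x ≠ 0), σ x hx 0 = 0 := by
    intro x hx
    exact (huniq x hx 0 0 (by rw [zero_smul, zero_smul, h0])).symm
  -- σ does not depend on the direction : independent case
  have hσNC : ∀ (x y : Fin d → F) (hx : x ≠ 0) (hy : y ≠ 0), ¬ Col 0 x y →
      ∀ t : F, σ x hx t = σ y hy t := by
    intro x y hx hy hnc t
    by_cases ht : t = 0
    · rw [ht, hσ0, hσ0]
    have hxy0 : x + y ≠ 0 := by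
      intro h
      exact hnc (col_zero_iff.mpr (Or.inr ⟨-1, by rw [neg_smul, one_smul, eq_neg_iff_add_eq_zero, h]⟩))
    have hnct : ¬ Col 0 (t • x) (t • y) := by
      intro hc
      rcases col_zero_iff.mp hc with h1 | ⟨l, hl⟩
      · exact hy (by simpa [ht] using smul_eq_zero.mp h1)
      · apply hnc
        refine col_zero_iff.mpr (Or.inr ⟨l, ?_⟩)
        have : t • x = t • (l • y) := by rw [hl, smul_smul, smul_smul, mul_comm]
        exact smul_right_injective (Fin d → F) ht this
    have h1 : f (t • (x + y)) = σ x hx t • f x + σ y hy t • f y := by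
      rw [smul_add]
      rw [add_of_indep hbij h0 hC hnct, hσ x hx t, hσ y hy t]
    have h2 : f (t • (x + y)) = σ (x+y) hxy0 t • f x + σ (x+y) hxy0 t • f y := by
      rw [hσ (x+y) hxy0 t, add_of_indep hbij h0 hC hnc, smul_add]
    have h3 : (σ x hx t - σ (x+y) hxy0 t) • f x
        = (σ (x+y) hxy0 t - σ y hy t) • f y := by
      rw [sub_smul, sub_smul]
      have := h1.symm.trans h2
      funext j
      have hj := congrFun this j
      simp only [Pi.add_apply, Pi.smul_apply, Pi.sub_apply, smul_eq_mul] at hj ⊢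
      linarith
    have h4 := coeff_zero (ncol_f h0 hC hnc) h3
    exact (sub_eq_zero.mp h4.1).trans (sub_eq_zero.mp h4.2)
  -- general independence of direction
  have hσall : ∀ (x y : Fin d → F) (hx : x ≠ 0) (hy : y ≠ 0) (t : F),
      σ x hx t = σ y hy t := by
    intro x y hx hy t
    by_cases hnc : Col 0 x y
    · rcases col_zero_iff.mp hnc with h1 | ⟨l, hl⟩
      · exact absurd h1 hy
      obtain ⟨j, hj⟩ := Function.ne_iff.mp hy
      have hyj : y j ≠ 0 := by simpa using hj
      have hl0 : l ≠ 0 := by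
        rintro rfl; rw [zero_smul] at hl; exact hx hl
      haveI : Nontrivial (Fin d) :=
        ⟨⟨⟨0, by omega⟩, ⟨1, by omega⟩, by simp [Fin.ext_iff]⟩⟩
      obtain ⟨j', hjj'⟩ : ∃ j' : Fin d, j' ≠ j := exists_ne j
      set z : Fin d → F := Pi.single j' 1 with hzdef
      have hz0 : z ≠ 0 := by
        intro h
        have := congrFun h j'
        simp [hzdef] at this
      have hncyz : ¬ Col 0 y z := by
        intro hc
        rcases col_zero_iff.mp hc with h1 | ⟨m, hm⟩
        · exact hz0 h1
        · have := congrFun hm j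
          simp [hzdef, Pi.single_eq_of_ne hjj'.symm] at this
          · exact hyj this
      have hncxz : ¬ Col 0 x z := by
        intro hc
        rcases col_zero_iff.mp hc with h1 | ⟨m, hm⟩
        · exact hz0 h1
        · have := congrFun hm j
          rw [hl] at this
          simp [hzdef, Pi.single_eq_of_ne hjj'.symm] at this
          rcases this with h | h
          · exact hl0 h
          · exact hyj h
      rw [hσNC x z hx hz0 hncxz t, hσNC y z hy hz0 hncyz t]
    · exact hσNC x y hx hy hnc t
  -- basis vectors
  set i0 : Fin d := ⟨0, by omega⟩ with hi0
  set i1 : Fin d := ⟨1, by omega⟩ with hi1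
  have hi01 : i0 ≠ i1 := by simp [hi0, hi1, Fin.ext_iff]
  set e0 : Fin d → F := Pi.single i0 1 with he0def
  set e1 : Fin d → F := Pi.single i1 1 with he1def
  have he0 : e0 ≠ 0 := by
    intro h; have := congrFun h i0; simp [he0def] at this
  have he1 : e1 ≠ 0 := by
    intro h; have := congrFun h i1; simp [he1def] at this
  have he0_i1 : e0 i1 = 0 := Pi.single_eq_of_ne hi01.symm 1
  have he1_i0 : e1 i0 = 0 := Pi.single_eq_of_ne hi01 1
  have he0_i0 : e0 i0 = 1 := Pi.single_eq_same i0 1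
  have he1_i1 : e1 i1 = 1 := Pi.single_eq_same i1 1
  set α0 : F → F := σ e0 he0 with hα0def
  have hfe0 : f e0 ≠ 0 := fne0 hinj h0 he0
  have hmulvec : ∀ (t : F) (x : Fin d → F), f (t • x) = α0 t • f x := by
    intro t x
    by_cases hx : x = 0
    · rw [hx, smul_zero, h0, smul_zero]
    · rw [hσ x hx t, hσall x e0 hx he0 t]
  have hα00 : α0 0 = 0 := hσ0 e0 he0
  have hα01 : α0 1 = 1 :=
    (huniq e0 he0 1 1 (by rw [one_smul, one_smul])).symm
  -- f (a • e0 + e1)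
  have G : ∀ a : F, f (a • e0 + e1) = α0 a • f e0 + f e1 := by
    intro a
    by_cases ha : a = 0
    · rw [ha, hα00, zero_smul, zero_smul, zero_add, zero_add]
    · have hnc : ¬ Col 0 (a • e0) e1 := by
        intro hc
        rcases col_zero_iff.mp hc with h1 | ⟨l, hl⟩
        · exact he1 h1
        · have h2 := congrFun hl i0
          simp only [Pi.smul_apply, smul_eq_mul] at h2
          rw [he0_i0, he1_i0] at h2
          simp at h2
          exact ha h2
      rw [add_of_indep hbij h0 hC hnc, hmulvec]
  -- additivity of α0
  have hadd : ∀ s t : F, α0 (s + t) = α0 s + α0 t := by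
    intro s t
    by_cases ht : t = 0
    · rw [ht, hα00, add_zero, add_zero]
    · have hnc : ¬ Col 0 (s • e0 + e1) (t • e0) := by
        intro hc
        rcases col_zero_iff.mp hc with h1 | ⟨l, hl⟩
        · apply ht
          have h1' := congrFun h1 i0
          simp only [Pi.smul_apply, Pi.zero_apply, smul_eq_mul] at h1'
          rw [he0_i0, mul_one] at h1'
          exact h1'
        · have h2' := congrFun hl i1
          simp only [Pi.add_apply, Pi.smul_apply, smul_eq_mul] at h2'
          rw [he0_i1, he1_i1] at h2'
          simp at h2'
      have h2 : (s + t) • e0 + e1 = (s • e0 + e1) + t • e0 := by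
        rw [add_smul]; abel
      have h4 : α0 (s+t) • f e0 + f e1 = (α0 s + α0 t) • f e0 + f e1 := by
        rw [← G (s+t), h2, add_of_indep hbij h0 hC hnc, G s, hmulvec, add_smul]
        abel
      exact smul_cancel_vec hfe0 (add_right_cancel h4)
  have hmul : ∀ s t : F, α0 (s * t) = α0 s * α0 t := by
    intro s t
    have h1 : f ((s * t) • e0) = α0 (s*t) • f e0 := hmulvec _ _
    have h2 : f ((s * t) • e0) = (α0 s * α0 t) • f e0 := by
      rw [mul_smul, hmulvec s (t • e0), hmulvec t e0, smul_smul]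
    exact smul_cancel_vec hfe0 (h1.symm.trans h2)
  have hinjα : Function.Injective α0 := by
    intro s t h
    have h1 : f (s • e0) = f (t • e0) := by rw [hmulvec, hmulvec, h]
    exact smul_cancel_vec he0 (hinj h1)
  have hsurjα : Function.Surjective α0 := by
    intro m
    obtain ⟨u, hu⟩ := hbij.2 (m • f e0)
    have hcol : Col 0 u e0 := by
      refine (hC 0 u e0).mpr ?_
      rw [h0, hu]
      exact col_zero_iff.mpr (Or.inr ⟨m, rfl⟩)
    rcases col_zero_iff.mp hcol with h1 | ⟨l, hl⟩
    · exact absurd h1 he0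
    · refine ⟨l, ?_⟩
      apply smul_cancel_vec hfe0
      rw [← hmulvec l e0, ← hl, hu]
  set αhom : F →+* F :=
    { toFun := α0, map_one' := hα01, map_mul' := hmul,
      map_zero' := hα00, map_add' := hadd } with hαhom
  set α : F ≃+* F := RingEquiv.ofBijective αhom ⟨hinjα, hsurjα⟩ with hαdef
  have hαcoe : ∀ s : F, α s = α0 s := fun s => rfl
  -- order preservation
  have hposiff : ∀ t : F, 0 ≤ t ↔ 0 ≤ α0 t := by
    intro t
    rw [bw_scal he0 t, hB 0 (t • e0) ((t+1) • e0), h0, hmulvec t e0, hmulvec (t+1) e0,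
      hadd, hα01]
    exact (bw_scal hfe0 (α0 t)).symm
  have hsub : ∀ s t : F, α0 (t - s) = α0 t - α0 s := by
    intro s t
    have h1 := hadd (t - s) s
    rw [sub_add_cancel] at h1
    linarith
  have horder : ∀ s t : F, s ≤ t ↔ α0 s ≤ α0 t := by
    intro s t
    rw [← sub_nonneg, ← sub_nonneg (b := α0 s), ← hsub s t]
    exact hposiff (t - s)
  -- full additivity
  have fulladd : ∀ u v : Fin d → F, f (u + v) = f u + f v := by
    intro u v
    by_cases hcuv : Col 0 u v
    · rcases col_zero_iff.mp hcuv with h1 | ⟨l, hl⟩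
      · rw [h1, add_zero, h0, add_zero]
      · rw [hl]
        have h2 : l • v + v = (l + 1) • v := by rw [add_smul, one_smul]
        rw [h2, hmulvec, hadd, hα01, add_smul, one_smul, hmulvec]
    · exact add_of_indep hbij h0 hC hcuv
  exact ⟨α, fun s t => horder s t, fulladd, fun c v => hmulvec c v⟩

end AuxFTAG3

/-- **Fundamental Theorem of Affine Geometry (ordered case).** Over a linearly ordered field `F`
and `d ≥ 2`, a bijection `g` of `F^d` respects betweenness iff `g = A ∘ α̃` for some affine
transformation `A` of `F^d` and some order-preserving field automorphism `α` of `F`. -/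
theorem fundamental_theorem_affine_geometry_ordered
    (F : Type) [Field F] [LinearOrder F] [IsStrictOrderedRing F] (d : ℕ) (hd : 2 ≤ d)
    (g : (Fin d → F) → (Fin d → F)) (hg : Function.Bijective g) :
    (∀ p q r : Fin d → F, Bw p q r ↔ Bw (g p) (g q) (g r)) ↔
      ∃ (A : (Fin d → F) → (Fin d → F)) (α : F ≃+* F),
        IsAffineTrf F d A ∧ (∀ x y : F, x ≤ y ↔ α x ≤ α y) ∧ g = A ∘ indMap α := by
  constructor
  · intro hbw
    set f : (Fin d → F) → (Fin d → F) := fun v => g v + -(g 0) with hfdef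
    have hf0 : f 0 = 0 := by simp [hfdef]
    have hfbij : Function.Bijective f := by
      constructor
      · intro a b hab
        exact hg.1 (add_right_cancel hab)
      · intro w
        obtain ⟨u, hu⟩ := hg.2 (w + g 0)
        exact ⟨u, by simp [hfdef, hu]⟩
    have hfB : ∀ p q r, Bw p q r ↔ Bw (f p) (f q) (f r) := by
      intro p q r
      rw [hbw p q r]
      exact (bw_translate (-(g 0)) (g p) (g q) (g r)).symm
    obtain ⟨α, horder, haddf, hsmulf⟩ := key hd hfbij hf0 hfB
    have hIbij : Function.Bijective (indMap α.symm : (Fin d → F) → (Fin d → F)) := by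
      refine Function.bijective_iff_has_inverse.mpr ⟨indMap α, ?_, ?_⟩
      · intro v; funext j; exact α.apply_symm_apply (v j)
      · intro v; funext j; exact α.symm_apply_apply (v j)
    set L0 : (Fin d → F) →ₗ[F] (Fin d → F) :=
      { toFun := fun v => f (indMap α.symm v)
        map_add' := by
          intro u v
          have h1 : indMap α.symm (u + v) = indMap α.symm u + indMap α.symm v :=
            funext fun j => map_add α.symm (u j) (v j)
          show f (indMap α.symm (u + v)) = f (indMap α.symm u) + f (indMap α.symm v)
          rw [h1, haddf]
        map_smul' := by
          intro c v
          have h1 : indMap α.symm (c • v) = α.symm c • indMap α.symm v :=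
            funext fun j => map_mul α.symm c (v j)
          show f (indMap α.symm (c • v)) = (RingHom.id F) c • f (indMap α.symm v)
          rw [h1, hsmulf, RingEquiv.apply_symm_apply]
          rfl } with hL0
    have hLbij : Function.Bijective L0 := hfbij.comp hIbij
    set L := LinearEquiv.ofBijective L0 hLbij with hLdef
    refine ⟨fun p => L0 p + g 0, α, ⟨L, g 0, fun p => rfl⟩, horder, ?_⟩
    funext v
    have h1 : indMap α.symm (indMap α v) = v := funext fun j => α.symm_apply_apply (v j)
    simp only [Function.comp_apply]
    show g v = f (indMap α.symm (indMap α v)) + g 0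
    rw [h1, hfdef]
    simp
  · rintro ⟨A, α, ⟨L, t, hA⟩, hα, hgA⟩
    subst hgA
    intro p q r
    simp only [Function.comp_apply, hA]
    constructor
    · rintro ⟨l, hl0, hl1, hq⟩
      refine ⟨α l, ?_, ?_, ?_⟩
      · have h1 := (hα 0 l).mp hl0
        rwa [map_zero] at h1
      · have h1 := (hα l 1).mp hl1
        rwa [map_one] at h1
      · have hq' : indMap α q = indMap α p + α l • (indMap α r - indMap α p) := by
          funext j
          simp only [indMap, Pi.add_apply, Pi.smul_apply, Pi.sub_apply, smul_eq_mul]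
          rw [congrFun hq j, Pi.add_apply, Pi.smul_apply, Pi.sub_apply, smul_eq_mul,
            map_add, map_mul, map_sub]
        rw [hq', map_add, map_smul, map_sub]
        have hc : (L (indMap α r) + t) - (L (indMap α p) + t)
            = L (indMap α r) - L (indMap α p) := by abel
        rw [hc]
        abel
    · rintro ⟨l, hl0, hl1, hq⟩
      have h1 : L (indMap α q) + t = L (indMap α p + l • (indMap α r - indMap α p)) + t := by
        have hc : L (indMap α r) + t - (L (indMap α p) + t)
            = L (indMap α r) - L (indMap α p) := by abel
        rw [hq, hc, map_add, map_smul, map_sub]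
        abel
      have hL : indMap α q = indMap α p + l • (indMap α r - indMap α p) :=
        L.injective (add_right_cancel h1)
      refine ⟨α.symm l, ?_, ?_, ?_⟩
      · have h2 := hα 0 (α.symm l)
        rw [map_zero, RingEquiv.apply_symm_apply] at h2
        exact h2.mpr hl0
      · have h2 := hα (α.symm l) 1
        rw [map_one, RingEquiv.apply_symm_apply] at h2
        exact h2.mpr hl1
      · funext j
        have hj := congrFun hL j
        simp only [indMap, Pi.add_apply, Pi.smul_apply, Pi.sub_apply, smul_eq_mul] at hj
        have h3 := congrArg α.symm hj
        rw [RingEquiv.symm_apply_apply, map_add, map_mul, map_sub,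
          RingEquiv.symm_apply_apply, RingEquiv.symm_apply_apply] at h3
        simpa using h3
end

section
/- Let F be a linearly ordered field, let d ≥ 2, and let G be a field-definable coordinate geometry over the ordered field F. Then a bijection g : F^d → F^d is an automorphism of G if and only if g = A ∘ α̃ for some affine automorphism A of G and some automorphism α of the ordered field F, where α̃ is the map acting as α on each coordinate. (In particular, Aut(G) = AffAut(G) ∘ {α̃ : α ∈ Aut(F)}.) -/
open FirstOrder

namespace AutProof

variable {F : Type} [Field F] [LinearOrder F] [IsStrictOrderedRing F] {d : ℕ}

lemma bw_translate (v p q r : Fin d → F) : Bw (p + v) (q + v) (r + v) ↔ Bw p q r := by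
  constructor <;> rintro ⟨l, h0, h1, he⟩ <;> refine ⟨l, h0, h1, ?_⟩
  · have : p + v + l • (r + v - (p + v)) = p + l • (r - p) + v := by module
    rw [this] at he
    exact add_right_cancel he
  · rw [he]; module

lemma col_iff_bw (p q r : Fin d → F) : Col p q r ↔ Bw p q r ∨ Bw q p r ∨ Bw p r q := by
  constructor
  · rintro (hrp | ⟨l, hq⟩)
    · exact Or.inr (Or.inr ⟨0, le_refl 0, zero_le_one, by rw [hrp]; module⟩)
    · rcases le_or_gt 0 l with h0 | h0
      · rcases le_or_gt l 1 with h1 | h1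
        · exact Or.inl ⟨l, h0, h1, hq⟩
        · have hl : (0:F) < l := lt_trans zero_lt_one h1
          refine Or.inr (Or.inr ⟨1 / l, by positivity, by rw [div_le_one hl]; linarith, ?_⟩)
          rw [hq]
          have : (1 / l) * l = 1 := by field_simp
          match_scalars <;> field_simp <;> ring
      · have hl1 : l - 1 < 0 := by linarith
        refine Or.inr (Or.inl ⟨l / (l - 1), ?_, ?_, ?_⟩)
        · exact le_of_lt (div_pos_of_neg_of_neg h0 hl1)
        · rw [div_le_one_iff]
          right; right; exact ⟨hl1, by linarith⟩
        · rw [hq]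
          have hne : l - 1 ≠ 0 := ne_of_lt hl1
          match_scalars <;> field_simp <;> ring
  · rintro (⟨l, h0, h1, he⟩ | ⟨l, h0, h1, he⟩ | ⟨l, h0, h1, he⟩)
    · exact Or.inr ⟨l, he⟩
    · rcases eq_or_lt_of_le h1 with h1e | h1l
      · left
        subst h1e
        rw [he]
        module
      · right
        refine ⟨-l / (1 - l), ?_⟩
        rw [he]
        have h1l' : (1:F) - l ≠ 0 := by linarith
        match_scalars <;> field_simp <;> ring
    · rcases eq_or_lt_of_le h0 with h0e | h0l
      · left
        rw [← h0e] at he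
        rw [he]
        module
      · right
        refine ⟨1 / l, ?_⟩
        rw [he]
        have : l ≠ 0 := ne_of_gt h0l
        match_scalars <;> field_simp <;> ring

/-- Membership in the line through `a` and `b`. -/
def OnLine (a b x : Fin d → F) : Prop := ∃ t : F, x = a + t • (b - a)

lemma col_iff_onLine {a b : Fin d → F} (hab : a ≠ b) (x : Fin d → F) :
    Col a x b ↔ OnLine a b x := by
  unfold Col OnLine
  simp [eq_comm, hab]

/-- Linear independence of two vectors, concretely. -/
def Indep (x y : Fin d → F) : Prop := ∀ a b : F, a • x + b • y = 0 → a = 0 ∧ b = 0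

lemma Indep.left_ne_zero {x y : Fin d → F} (h : Indep x y) : x ≠ 0 := by
  intro hx
  have := (h 1 0 (by rw [hx]; module)).1
  exact one_ne_zero this

lemma Indep.right_ne_zero {x y : Fin d → F} (h : Indep x y) : y ≠ 0 := by
  intro hy
  have := (h 0 1 (by rw [hy]; module)).2
  exact one_ne_zero this

lemma Indep.symm {x y : Fin d → F} (h : Indep x y) : Indep y x := by
  intro a b hab
  have := h b a (by rw [← hab]; module)
  exact ⟨this.2, this.1⟩

lemma indep_iff_not_col {x y : Fin d → F} : Indep x y ↔ ¬ Col 0 y x := by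
  constructor
  · intro h hc
    rcases hc with hx | ⟨l, hy⟩
    · exact h.left_ne_zero hx
    · have : l • x + (-1 : F) • y = 0 := by rw [hy]; module
      exact one_ne_zero (neg_eq_zero.mp (h l (-1) this).2)
  · intro hc a b hab
    constructor
    · by_contra ha
      by_cases hb : b = 0
      · subst hb
        have hx : x = 0 := by
          have : a • x = 0 := by rw [← hab]; module
          exact (smul_eq_zero.mp this).resolve_left ha
        exact hc (Or.inl hx)
      · refine hc (Or.inr ⟨-a / b, ?_⟩)
        have h2 : b • y = (-a) • x := by linear_combination (norm := module) hab
        have hy : y = (-a / b) • x := by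
          calc y = b⁻¹ • (b • y) := by rw [smul_smul, inv_mul_cancel₀ hb, one_smul]
          _ = b⁻¹ • ((-a) • x) := by rw [h2]
          _ = (-a / b) • x := by rw [smul_smul]; congr 1; ring
        rw [hy]; module
    · by_contra hb
      refine hc (Or.inr ⟨-a / b, ?_⟩)
      have h2 : b • y = (-a) • x := by linear_combination (norm := module) hab
      have hy : y = (-a / b) • x := by
        calc y = b⁻¹ • (b • y) := by rw [smul_smul, inv_mul_cancel₀ hb, one_smul]
        _ = b⁻¹ • ((-a) • x) := by rw [h2]
        _ = (-a / b) • x := by rw [smul_smul]; congr 1; ring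
      rw [hy]; module

/-- Membership in the span of two vectors, concretely. -/
def InSpan (x y p : Fin d → F) : Prop := ∃ s t : F, p = s • x + t • y

lemma coord_unique {x y : Fin d → F} (hxy : Indep x y) {s t s' t' : F}
    (h : s • x + t • y = s' • x + t' • y) : s = s' ∧ t = t' := by
  have h2 : (s - s') • x + (t - t') • y = 0 := by
    linear_combination (norm := module) h
  obtain ⟨e1, e2⟩ := hxy _ _ h2
  exact ⟨by linarith [sub_eq_zero.mp e1], by linarith [sub_eq_zero.mp e2]⟩

lemma disjoint_lines {x y p q p' q' : Fin d → F} (hxy : Indep x y)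
    (hp : InSpan x y p) (hq : InSpan x y q) (hp' : InSpan x y p') (hq' : InSpan x y q')
    (hpq : p ≠ q)
    (hdisj : ∀ z, OnLine p q z → OnLine p' q' z → False) :
    ∃ c : F, q' - p' = c • (q - p) := by
  obtain ⟨p1, p2, hpc⟩ := hp
  obtain ⟨q1, q2, hqc⟩ := hq
  obtain ⟨p1', p2', hpc'⟩ := hp'
  obtain ⟨q1', q2', hqc'⟩ := hq'
  by_cases hδ : (q1 - p1) * (q2' - p2') - (q2 - p2) * (q1' - p1') = 0
  · -- directions are proportional
    have hdir : q - p = (q1 - p1) • x + (q2 - p2) • y := by rw [hpc, hqc]; module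
    have hdir' : q' - p' = (q1' - p1') • x + (q2' - p2') • y := by rw [hpc', hqc']; module
    have hdne : ¬(q1 - p1 = 0 ∧ q2 - p2 = 0) := by
      rintro ⟨e1, e2⟩
      apply hpq
      have hz : q - p = 0 := by rw [hdir, e1, e2]; module
      exact (sub_eq_zero.mp hz).symm
    by_cases hden1 : q1 - p1 = 0
    · have hden2 : q2 - p2 ≠ 0 := fun e => hdne ⟨hden1, e⟩
      refine ⟨(q2' - p2') / (q2 - p2), ?_⟩
      rw [hdir, hdir']
      match_scalars
      · field_simp
        linear_combination -hδ
      · field_simp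
    · refine ⟨(q1' - p1') / (q1 - p1), ?_⟩
      rw [hdir, hdir']
      match_scalars
      · field_simp
      · field_simp
        linear_combination hδ
  · -- lines must intersect: contradiction
    exfalso
    apply hdisj (p + (((p1' - p1) * (q2' - p2') - (p2' - p2) * (q1' - p1')) /
      ((q1 - p1) * (q2' - p2') - (q2 - p2) * (q1' - p1'))) • (q - p)) ⟨_, rfl⟩
    refine ⟨((p1' - p1) * (q2 - p2) - (p2' - p2) * (q1 - p1)) /
      ((q1 - p1) * (q2' - p2') - (q2 - p2) * (q1' - p1')), ?_⟩
    rw [hpc, hqc, hpc', hqc']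
    set D := (q1 - p1) * (q2' - p2') - (q2 - p2) * (q1' - p1') with hD
    have hδ' : D ≠ 0 := hδ
    match_scalars
    · field_simp
      rw [hD]; ring
    · field_simp
      rw [hD]; ring

section Transfer

variable {h : (Fin d → F) → (Fin d → F)} (hbij : Function.Bijective h)
  (hBw : ∀ p q r, Bw p q r ↔ Bw (h p) (h q) (h r)) (h0 : h 0 = 0)

include hBw

lemma col_transfer (p q r : Fin d → F) : Col p q r ↔ Col (h p) (h q) (h r) := by
  rw [col_iff_bw, col_iff_bw, hBw, hBw p r q, hBw q p r]

include hbij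

lemma onLine_transfer {a b : Fin d → F} (hab : a ≠ b) (x : Fin d → F) :
    OnLine a b x ↔ OnLine (h a) (h b) (h x) := by
  rw [← col_iff_onLine hab, ← col_iff_onLine (fun e => hab (hbij.injective e)),
    col_transfer hBw]

lemma onLine_onto {a b : Fin d → F} (hab : a ≠ b) {y : Fin d → F}
    (hy : OnLine (h a) (h b) y) : ∃ x, OnLine a b x ∧ h x = y := by
  obtain ⟨x, rfl⟩ := hbij.surjective y
  exact ⟨x, (onLine_transfer hbij hBw hab x).mpr hy, rfl⟩

include h0

lemma indep_transfer {x y : Fin d → F} : Indep x y ↔ Indep (h x) (h y) := by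
  rw [indep_iff_not_col, indep_iff_not_col, col_transfer hBw 0 y x, h0]

lemma ne_zero_transfer {x : Fin d → F} (hx : x ≠ 0) : h x ≠ 0 := by
  intro hhx
  exact hx (hbij.injective (by rw [hhx, h0]))

lemma inSpan_transfer {x y p : Fin d → F} (hxy : Indep x y) (hp : InSpan x y p) :
    InSpan (h x) (h y) (h p) := by
  obtain ⟨s, t, rfl⟩ := hp
  have hx0 : x ≠ 0 := hxy.left_ne_zero
  have hy0 : y ≠ 0 := hxy.right_ne_zero
  by_cases hp0 : s • x + t • y = 0
  · rw [hp0, h0]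
    exact ⟨0, 0, by module⟩
  -- the two auxiliary points
  have hu : OnLine 0 x ((2 * s) • x) := ⟨2 * s, by module⟩
  have hw : OnLine 0 y ((2 * t) • y) := ⟨2 * t, by module⟩
  have huw : (2 * s) • x ≠ (2 * t) • y := by
    intro he
    have h2 : (2 * s) • x + (-(2 * t)) • y = 0 := by
      rw [he]; module
    obtain ⟨hs, ht⟩ := hxy _ _ h2
    have hs0 : s = 0 := by
      have h2 : (2:F) ≠ 0 := two_ne_zero
      exact (mul_eq_zero.mp hs).resolve_left h2
    have ht0 : t = 0 := by
      have h2 : (2:F) ≠ 0 := two_ne_zero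
      rw [neg_eq_zero] at ht
      exact (mul_eq_zero.mp ht).resolve_left h2
    exact hp0 (by rw [hs0, ht0]; module)
  have hponline : OnLine ((2 * s) • x) ((2 * t) • y) (s • x + t • y) :=
    ⟨1 / 2, by match_scalars <;> field_simp <;> ring⟩
  -- transfer to images
  have hux : OnLine 0 (h x) (h ((2 * s) • x)) := by
    have := (onLine_transfer hbij hBw (fun e => hx0 e.symm) _).mp hu
    rwa [h0] at this
  have hwy : OnLine 0 (h y) (h ((2 * t) • y)) := by
    have := (onLine_transfer hbij hBw (fun e => hy0 e.symm) _).mp hw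
    rwa [h0] at this
  obtain ⟨a', ha'⟩ := hux
  obtain ⟨b', hb'⟩ := hwy
  have ha'' : h ((2 * s) • x) = a' • h x := by rw [ha']; module
  have hb'' : h ((2 * t) • y) = b' • h y := by rw [hb']; module
  obtain ⟨c, hc⟩ := (onLine_transfer hbij hBw huw _).mp hponline
  refine ⟨a' - c * a', c * b', ?_⟩
  rw [hc, ha'', hb'']
  module

lemma sub_aux {x y : Fin d → F} (hxy : Indep x y) :
    ∃ c : F, h (x + y) - h y = c • (h x - 0) := by
  have hx0 : x ≠ 0 := hxy.left_ne_zero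
  have hy0 : y ≠ 0 := hxy.right_ne_zero
  have hxy' : Indep (h x) (h y) := (indep_transfer hbij hBw h0).mp hxy
  have hyz : y ≠ x + y := by
    intro e
    exact hx0 (by linear_combination (norm := module) -e)
  have hdisj1 : ∀ z, OnLine 0 x z → OnLine y (x + y) z → False := by
    rintro z ⟨t, ht⟩ ⟨s, hs⟩
    have he : (t - s) • x + (-1 : F) • y = 0 := by
      linear_combination (norm := module) hs - ht
    exact one_ne_zero (neg_eq_zero.mp (hxy _ _ he).2)
  have hz' : InSpan (h x) (h y) (h (x + y)) :=
    inSpan_transfer hbij hBw h0 hxy ⟨1, 1, by module⟩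
  have h0x : (0 : Fin d → F) ≠ x := fun e => hx0 e.symm
  have hdisj2 : ∀ z, OnLine 0 (h x) z → OnLine (h y) (h (x + y)) z → False := by
    intro z hz1 hz2
    have hz1' : OnLine (h 0) (h x) z := by rwa [h0]
    obtain ⟨x₁, hx₁, he₁⟩ := onLine_onto hbij hBw h0x hz1'
    obtain ⟨x₂, hx₂, he₂⟩ := onLine_onto hbij hBw hyz hz2
    have : x₁ = x₂ := hbij.injective (by rw [he₁, he₂])
    exact hdisj1 x₁ hx₁ (this ▸ hx₂)
  exact disjoint_lines hxy' ⟨0, 0, by module⟩ ⟨1, 0, by module⟩ ⟨0, 1, by module⟩ hz'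
    (fun e => ne_zero_transfer hbij hBw h0 hx0 e.symm) hdisj2

lemma add_indep {x y : Fin d → F} (hxy : Indep x y) : h (x + y) = h x + h y := by
  have hxy' : Indep (h x) (h y) := (indep_transfer hbij hBw h0).mp hxy
  obtain ⟨c, e1⟩ := sub_aux hbij hBw h0 hxy
  obtain ⟨c', e2⟩ := sub_aux hbij hBw h0 hxy.symm
  rw [add_comm y x] at e2
  have e3 : (c - 1) • h x + (1 - c') • h y = 0 := by
    linear_combination (norm := module) e2 - e1
  obtain ⟨hc1, _⟩ := hxy' _ _ e3
  have hc : c = 1 := by linarith [sub_eq_zero.mp hc1]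
  rw [hc] at e1
  linear_combination (norm := module) e1

end Transfer

lemma exists_indep (hd : 2 ≤ d) {x : Fin d → F} (hx : x ≠ 0) : ∃ z, Indep x z := by
  obtain ⟨i, hi⟩ : ∃ i, x i ≠ 0 := by
    by_contra hc
    push_neg at hc
    exact hx (funext fun i => hc i)
  haveI : Nontrivial (Fin d) :=
    ⟨⟨⟨0, by omega⟩, ⟨1, by omega⟩, by simp [Fin.ext_iff]⟩⟩
  obtain ⟨j, hj⟩ := exists_ne i
  refine ⟨Pi.single j 1, fun a b hab => ?_⟩
  have hci := congrFun hab i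
  have hcj := congrFun hab j
  simp [Pi.single_eq_of_ne (Ne.symm hj)] at hci
  have ha : a = 0 := hci.resolve_right hi
  subst ha
  simp at hcj
  exact ⟨rfl, hcj⟩

lemma dep_factor {x y : Fin d → F} (hx : x ≠ 0) (hy : y ≠ 0) (hni : ¬ Indep x y) :
    ∃ c : F, c ≠ 0 ∧ y = c • x := by
  unfold Indep at hni
  push_neg at hni
  obtain ⟨a, b, hab, hnab⟩ := hni
  have hb : b ≠ 0 := by
    intro hb0
    subst hb0
    have h1 : a • x = 0 := by linear_combination (norm := module) hab
    rcases smul_eq_zero.mp h1 with h2 | h2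
    · exact hnab h2 rfl
    · exact hx h2
  have h2 : b • y = (-a) • x := by linear_combination (norm := module) hab
  have hyx : y = (-a / b) • x := by
    calc y = b⁻¹ • (b • y) := by rw [smul_smul, inv_mul_cancel₀ hb, one_smul]
    _ = b⁻¹ • ((-a) • x) := by rw [h2]
    _ = (-a / b) • x := by rw [smul_smul]; congr 1; ring
  refine ⟨-a / b, ?_, hyx⟩
  intro hc0
  rw [hc0, zero_smul] at hyx
  exact hy hyx

lemma smul_cancel {v : Fin d → F} (hv : v ≠ 0) {a b : F} (e : a • v = b • v) : a = b := by
  have h1 : (a - b) • v = 0 := by linear_combination (norm := module) e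
  rcases smul_eq_zero.mp h1 with h2 | h2
  · linarith [sub_eq_zero.mp h2]
  · exact absurd h2 hv

lemma bw_smul {v : Fin d → F} (hv : v ≠ 0) (s : F) :
    Bw 0 (s • v) v ↔ 0 ≤ s ∧ s ≤ 1 := by
  constructor
  · rintro ⟨l, hl0, hl1, he⟩
    have h1 : s • v = l • v := by rw [he]; module
    have := smul_cancel hv h1
    exact ⟨this ▸ hl0, this ▸ hl1⟩
  · rintro ⟨hs0, hs1⟩
    exact ⟨s, hs0, hs1, by module⟩

section Semilinear

variable {h : (Fin d → F) → (Fin d → F)} (hbij : Function.Bijective h)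
  (hBw : ∀ p q r, Bw p q r ↔ Bw (h p) (h q) (h r)) (h0 : h 0 = 0)

include hbij hBw h0

lemma add_full (hd : 2 ≤ d) (x y : Fin d → F) : h (x + y) = h x + h y := by
  by_cases hx : x = 0
  · rw [hx, zero_add, h0, zero_add]
  by_cases hy : y = 0
  · rw [hy, add_zero, h0, add_zero]
  by_cases hxy : Indep x y
  · exact add_indep hbij hBw h0 hxy
  obtain ⟨z, hz⟩ := exists_indep hd hx
  obtain ⟨c, hc0, hc⟩ := dep_factor hx hy hxy
  have hyz : Indep y z := by
    intro a b he
    rw [hc] at he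
    have he' : (a * c) • x + b • z = 0 := by linear_combination (norm := module) he
    obtain ⟨h1, h2⟩ := hz _ _ he'
    exact ⟨(mul_eq_zero.mp h1).resolve_right hc0, h2⟩
  by_cases hxy0 : x + y = 0
  · have h1 : Indep x (y + z) := by
      intro a b he
      have hyx : y = -x := by
        have := hxy0
        linear_combination (norm := module) this
      rw [hyx] at he
      have he' : (a - b) • x + b • z = 0 := by linear_combination (norm := module) he
      obtain ⟨e1, e2⟩ := hz _ _ he'
      subst e2
      exact ⟨by linarith [sub_eq_zero.mp (by linarith : a - 0 = 0)], rfl⟩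
    have h2 : h (x + (y + z)) = h x + h (y + z) := add_indep hbij hBw h0 h1
    have h3 : x + (y + z) = z := by linear_combination (norm := module) hxy0
    rw [h3, add_indep hbij hBw h0 hyz] at h2
    rw [hxy0, h0]
    linear_combination (norm := module) h2
  · have h1c : 1 + c ≠ 0 := by
      intro he
      apply hxy0
      rw [hc]
      have : c = -1 := by linarith
      rw [this]
      module
    have hxyz : Indep (x + y) z := by
      intro a b he
      rw [hc] at he
      have he' : (a * (1 + c)) • x + b • z = 0 := by linear_combination (norm := module) he
      obtain ⟨h1, h2⟩ := hz _ _ he'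
      exact ⟨(mul_eq_zero.mp h1).resolve_right h1c, h2⟩
    have hxyz2 : Indep x (y + z) := by
      intro a b he
      rw [hc] at he
      have he' : (a + b * c) • x + b • z = 0 := by linear_combination (norm := module) he
      obtain ⟨h1, h2⟩ := hz _ _ he'
      subst h2
      refine ⟨by linarith, rfl⟩
    have e1 : h ((x + y) + z) = h (x + y) + h z := add_indep hbij hBw h0 hxyz
    have e2 : h (x + (y + z)) = h x + h (y + z) := add_indep hbij hBw h0 hxyz2
    have e3 : h (y + z) = h y + h z := add_indep hbij hBw h0 hyz
    rw [add_assoc] at e1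
    rw [e2, e3] at e1
    linear_combination (norm := module) -e1

lemma exists_scalar {x : Fin d → F} (hx : x ≠ 0) (t : F) :
    ∃ s : F, h (t • x) = s • h x := by
  have honl : OnLine 0 x (t • x) := ⟨t, by module⟩
  have h2 := (onLine_transfer hbij hBw (fun e => hx e.symm) _).mp honl
  rw [h0] at h2
  obtain ⟨s, hs⟩ := h2
  exact ⟨s, by rw [hs]; module⟩

lemma key_indep (hd : 2 ≤ d) {x y : Fin d → F} (hxy : Indep x y) {t s s' : F}
    (e1 : h (t • x) = s • h x) (e2 : h (t • y) = s' • h y) : s = s' := by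
  have hxy' : Indep (h x) (h y) := (indep_transfer hbij hBw h0).mp hxy
  have hxpy : x + y ≠ 0 := by
    intro he
    have h1 : (1 : F) • x + (1 : F) • y = 0 := by linear_combination (norm := module) he
    exact one_ne_zero (hxy _ _ h1).1
  obtain ⟨s'', e3⟩ := exists_scalar hbij hBw h0 hxpy t
  have e4 : t • (x + y) = t • x + t • y := by module
  rw [e4, add_full hbij hBw h0 hd, e1, e2] at e3
  rw [add_full hbij hBw h0 hd] at e3
  obtain ⟨f1, f2⟩ := coord_unique hxy' (by linear_combination (norm := module) e3 :
    s • h x + s' • h y = s'' • h x + s'' • h y)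
  rw [f1, f2]

lemma key (hd : 2 ≤ d) {x y : Fin d → F} (hx : x ≠ 0) (hy : y ≠ 0) {t s s' : F}
    (e1 : h (t • x) = s • h x) (e2 : h (t • y) = s' • h y) : s = s' := by
  by_cases hxy : Indep x y
  · exact key_indep hbij hBw h0 hd hxy e1 e2
  obtain ⟨z, hz⟩ := exists_indep hd hx
  obtain ⟨c, hc0, hc⟩ := dep_factor hx hy hxy
  have hyz : Indep y z := by
    intro a b he
    rw [hc] at he
    have he' : (a * c) • x + b • z = 0 := by linear_combination (norm := module) he
    obtain ⟨h1, h2⟩ := hz _ _ he'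
    exact ⟨(mul_eq_zero.mp h1).resolve_right hc0, h2⟩
  have hz0 : z ≠ 0 := hz.right_ne_zero
  obtain ⟨sz, ez⟩ := exists_scalar hbij hBw h0 hz0 t
  have r1 : s = sz := key_indep hbij hBw h0 hd hz e1 ez
  have r2 : s' = sz := key_indep hbij hBw h0 hd hyz e2 ez
  rw [r1, r2]

lemma semilinear (hd : 2 ≤ d) :
    ∃ α : F ≃+* F, (∀ x y : F, x ≤ y ↔ α x ≤ α y) ∧
      (∀ (t : F) (x : Fin d → F), h (t • x) = α t • h x) ∧
      (∀ x y, h (x + y) = h x + h y) := by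
  have hdd : 0 < d := by omega
  set e : Fin d → F := Pi.single ⟨0, hdd⟩ 1 with hedef
  have he : e ≠ 0 := by
    intro hc
    have := congrFun hc ⟨0, hdd⟩
    simp [hedef] at this
  have he' : h e ≠ 0 := ne_zero_transfer hbij hBw h0 he
  set α₀ : F → F := fun t => Classical.choose (exists_scalar hbij hBw h0 he t) with hα₀def
  have hα₀ : ∀ t, h (t • e) = α₀ t • h e := fun t =>
    Classical.choose_spec (exists_scalar hbij hBw h0 he t)
  have hsc : ∀ (t : F) (x : Fin d → F), h (t • x) = α₀ t • h x := by
    intro t x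
    by_cases hx : x = 0
    · simp [hx, h0]
    obtain ⟨s, hs⟩ := exists_scalar hbij hBw h0 hx t
    rw [hs, key hbij hBw h0 hd hx he hs (hα₀ t)]
  have hadd := add_full hbij hBw h0 hd
  have hmap_add : ∀ s t, α₀ (s + t) = α₀ s + α₀ t := by
    intro s t
    apply smul_cancel he'
    calc α₀ (s + t) • h e = h ((s + t) • e) := (hα₀ _).symm
    _ = h (s • e + t • e) := by rw [add_smul]
    _ = h (s • e) + h (t • e) := hadd _ _
    _ = (α₀ s + α₀ t) • h e := by rw [hα₀, hα₀]; module
  have hmap_mul : ∀ s t, α₀ (s * t) = α₀ s * α₀ t := by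
    intro s t
    apply smul_cancel he'
    calc α₀ (s * t) • h e = h ((s * t) • e) := (hα₀ _).symm
    _ = h (s • t • e) := by rw [smul_smul]
    _ = α₀ s • h (t • e) := hsc s (t • e)
    _ = (α₀ s * α₀ t) • h e := by rw [hα₀ t, smul_smul]
  have hone : α₀ 1 = 1 := by
    apply smul_cancel he'
    rw [← hα₀ 1, one_smul, one_smul]
  have hzero : α₀ 0 = 0 := by
    apply smul_cancel he'
    rw [← hα₀ 0, zero_smul, h0, zero_smul]
  have hinj : Function.Injective α₀ := by
    intro a b hab
    have h1 : h (a • e) = h (b • e) := by rw [hα₀, hα₀, hab]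
    exact smul_cancel he (hbij.injective h1)
  have hsurj : Function.Surjective α₀ := by
    intro s
    have h2 : OnLine (h 0) (h e) (s • h e) := by
      rw [h0]; exact ⟨s, by module⟩
    obtain ⟨w, hw, hwe⟩ := onLine_onto hbij hBw (fun he0 => he he0.symm) h2
    obtain ⟨t, ht⟩ := hw
    have hw' : w = t • e := by rw [ht]; module
    refine ⟨t, smul_cancel he' ?_⟩
    rw [← hα₀ t, ← hw', hwe]
  have hbij₀ : Function.Bijective α₀ := ⟨hinj, hsurj⟩
  have hinv : ∀ s : F, s ≠ 0 → α₀ s⁻¹ = (α₀ s)⁻¹ := by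
    intro s hs
    have h1 : α₀ s * α₀ s⁻¹ = 1 := by
      rw [← hmap_mul, mul_inv_cancel₀ hs, hone]
    exact eq_inv_of_mul_eq_one_right h1
  have hne0 : ∀ s : F, s ≠ 0 → α₀ s ≠ 0 := by
    intro s hs hc
    exact hs (hinj (by rw [hc, hzero]))
  have hBw01 : ∀ s : F, (0 ≤ s ∧ s ≤ 1) ↔ (0 ≤ α₀ s ∧ α₀ s ≤ 1) := by
    intro s
    rw [← bw_smul he s, ← bw_smul he' (α₀ s), hBw 0 (s • e) e, h0, hsc]
  have hpos : ∀ s : F, 0 ≤ s ↔ 0 ≤ α₀ s := by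
    intro s
    constructor
    · intro hs
      rcases le_or_gt s 1 with h1 | h1
      · exact ((hBw01 s).mp ⟨hs, h1⟩).1
      · have hs0 : s ≠ 0 := by linarith
        have hi1 : 0 ≤ s⁻¹ := by positivity
        have hi2 : s⁻¹ ≤ 1 := by
          rw [inv_le_one_iff₀]
          right; linarith
        have h2 := ((hBw01 s⁻¹).mp ⟨hi1, hi2⟩).1
        rw [hinv s hs0] at h2
        have h3 : (α₀ s)⁻¹ ≠ 0 := inv_ne_zero (hne0 s hs0)
        have h4 : 0 < (α₀ s)⁻¹ := lt_of_le_of_ne h2 (Ne.symm h3)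
        exact le_of_lt (inv_pos.mp h4)
    · intro hs
      rcases le_or_gt (α₀ s) 1 with h1 | h1
      · exact ((hBw01 s).mpr ⟨hs, h1⟩).1
      · have hs0 : s ≠ 0 := by
          intro hc
          rw [hc, hzero] at h1
          linarith
        have hi1 : 0 ≤ α₀ s⁻¹ := by
          rw [hinv s hs0]
          positivity
        have hi2 : α₀ s⁻¹ ≤ 1 := by
          rw [hinv s hs0, inv_le_one_iff₀]
          right; linarith
        have h2 := ((hBw01 s⁻¹).mpr ⟨hi1, hi2⟩).1
        have h3 : s⁻¹ ≠ 0 := inv_ne_zero hs0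
        have h4 : 0 < s⁻¹ := lt_of_le_of_ne h2 (Ne.symm h3)
        exact le_of_lt (inv_pos.mp h4)
  refine ⟨{ toEquiv := Equiv.ofBijective α₀ hbij₀,
            map_mul' := fun a b => hmap_mul a b,
            map_add' := fun a b => hmap_add a b }, ?_, hsc, hadd⟩
  intro x y
  show x ≤ y ↔ α₀ x ≤ α₀ y
  rw [← sub_nonneg, ← sub_nonneg (a := α₀ y), hpos (y - x)]
  have : α₀ (y - x) = α₀ y - α₀ x := by
    have h1 : α₀ (y - x) + α₀ x = α₀ y := by
      rw [← hmap_add, sub_add_cancel]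
    linarith
  rw [this]

end Semilinear


lemma isAut_realize {P : Type} (G : RelStruct P) {g : P → P} (hg : G.IsAut g)
    {n : ℕ} (φ : G.lang.Formula (Fin n)) (a : Fin n → P) :
    letI := G.str
    (φ.Realize (g ∘ a) ↔ φ.Realize a) := by
  letI := G.str
  let gE : P ≃[G.lang] P :=
    { toEquiv := Equiv.ofBijective g hg.1,
      map_fun' := fun {m} f _ => f.elim,
      map_rel' := fun {m} r x => (hg.2 r.1 fun j => x (Fin.cast r.2 j)).symm }
  exact Language.StrongHomClass.realize_formula gE φ

lemma concept_iff {P : Type} (G : RelStruct P) {g : P → P} (hg : G.IsAut g)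
    {n : ℕ} {R : (Fin n → P) → Prop} (hR : G.Concept R) (a : Fin n → P) :
    R a ↔ R (g ∘ a) := by
  obtain ⟨φ, hφ⟩ := hR
  rw [hφ, hφ, isAut_realize G hg φ a]

lemma orderedField_realize {F : Type} [Field F] [LinearOrder F] [IsStrictOrderedRing F] (β : F ≃+* F)
    (hβ : ∀ x y : F, x ≤ y ↔ β x ≤ β y) {γ : Type} (φ : orderedFieldLang.Formula γ)
    (v : γ → F) :
    letI := orderedFieldStr F
    (φ.Realize (β ∘ v) ↔ φ.Realize v) := by
  letI := orderedFieldStr F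
  let βE : F ≃[orderedFieldLang] F :=
    { toEquiv := β.toEquiv,
      map_fun' := fun {m} f x => by
        cases f
        · exact β.map_add _ _
        · exact β.map_mul _ _
        · exact β.map_zero
        · exact β.map_one
      map_rel' := fun {m} r x => by
        cases r
        exact (hβ (x 0) (x 1)).symm }
  exact Language.StrongHomClass.realize_formula βE φ

lemma indMap_bijective {F : Type} [Field F] [LinearOrder F] [IsStrictOrderedRing F] {d : ℕ} (β : F ≃+* F) :
    Function.Bijective (indMap β (d := d)) :=
  Function.bijective_iff_has_inverse.mpr
    ⟨indMap β.symm, fun p => funext fun j => β.symm_apply_apply _,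
      fun p => funext fun j => β.apply_symm_apply _⟩

lemma isAut_indMap {F : Type} [Field F] [LinearOrder F] [IsStrictOrderedRing F] {d : ℕ}
    (G : RelStruct (Fin d → F)) (hfd : ∀ i, DefinableOverOrderedField F d (G.rel i))
    (β : F ≃+* F) (hβ : ∀ x y : F, x ≤ y ↔ β x ≤ β y) : G.IsAut (indMap β) := by
  refine ⟨indMap_bijective β, fun i a => ?_⟩
  obtain ⟨φ, hφ⟩ := hfd i
  rw [hφ, hφ]
  exact (orderedField_realize β hβ φ fun q => a q.1 q.2).symm

lemma isAut_comp {P : Type} (G : RelStruct P) {f g : P → P}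
    (hf : G.IsAut f) (hg : G.IsAut g) : G.IsAut (f ∘ g) :=
  ⟨hf.1.comp hg.1, fun i a => (hg.2 i a).trans (hf.2 i (g ∘ a))⟩

end AutProof

/-- **Proposition.** Let `G` be a field-definable coordinate geometry over a linearly ordered
field `F` (`d ≥ 2`). A bijection `g` of `F^d` is an automorphism of `G` iff `g = A ∘ α̃` for some
affine automorphism `A` of `G` and some order-preserving field automorphism `α` of `F`. -/
theorem aut_iff_affAut_comp_induced
    (F : Type) [Field F] [LinearOrder F] [IsStrictOrderedRing F] (d : ℕ) (hd : 2 ≤ d)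
    (G : RelStruct (Fin d → F))
    (hfd : ∀ i, DefinableOverOrderedField F d (G.rel i))
    (hgeo : G.Concept (bwRel F d))
    (g : (Fin d → F) → (Fin d → F)) (hg : Function.Bijective g) :
    G.IsAut g ↔
      ∃ (A : (Fin d → F) → (Fin d → F)) (α : F ≃+* F),
        IsAffineTrf F d A ∧ G.IsAut A ∧ (∀ x y : F, x ≤ y ↔ α x ≤ α y) ∧
          g = A ∘ indMap α := by
  constructor
  · intro hAut
    have hBwg : ∀ p q r, Bw p q r ↔ Bw (g p) (g q) (g r) := by
      intro p q r
      have h1 := AutProof.concept_iff G hAut hgeo ![p, q, r]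
      have e1 : bwRel F d ![p, q, r] = Bw p q r := by
        simp [bwRel, Matrix.cons_val_zero, Matrix.cons_val_one, Matrix.head_cons]
      have e2 : bwRel F d (g ∘ ![p, q, r]) = Bw (g p) (g q) (g r) := by
        simp [bwRel, Matrix.cons_val_zero, Matrix.cons_val_one, Matrix.head_cons]
      rw [e1, e2] at h1
      exact h1
    set h : (Fin d → F) → (Fin d → F) := fun x => g x - g 0 with hhdef
    have hhbij : Function.Bijective h := (Equiv.subRight (g 0)).bijective.comp hg
    have hh0 : h 0 = 0 := sub_self _
    have hhBw : ∀ p q r, Bw p q r ↔ Bw (h p) (h q) (h r) := by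
      intro p q r
      rw [hBwg]
      show Bw _ _ _ ↔ Bw (g p - g 0) (g q - g 0) (g r - g 0)
      simp only [sub_eq_add_neg]
      exact (AutProof.bw_translate _ _ _ _).symm
    obtain ⟨α, horder, hsc, hadd⟩ := AutProof.semilinear hhbij hhBw hh0 hd
    have hsymm_order : ∀ x y : F, x ≤ y ↔ α.symm x ≤ α.symm y := by
      intro x y
      conv_lhs => rw [← α.apply_symm_apply x, ← α.apply_symm_apply y]
      exact (horder _ _).symm
    have hindsymm : ∀ p : Fin d → F, indMap α.symm (indMap α p) = p :=
      fun p => funext fun j => α.symm_apply_apply _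
    let L : (Fin d → F) →ₗ[F] (Fin d → F) :=
      { toFun := fun p => h (indMap α.symm p),
        map_add' := fun p q => by
          have e : indMap α.symm (p + q) = indMap α.symm p + indMap α.symm q :=
            funext fun j => map_add α.symm _ _
          show h (indMap α.symm (p + q)) = h (indMap α.symm p) + h (indMap α.symm q)
          rw [e, hadd],
        map_smul' := fun c p => by
          have e : indMap α.symm (c • p) = α.symm c • indMap α.symm p :=
            funext fun j => map_mul α.symm _ _
          show h (indMap α.symm (c • p)) = c • h (indMap α.symm p)
          rw [e, hsc, α.apply_symm_apply] }
    have hLbij : Function.Bijective L := hhbij.comp (AutProof.indMap_bijective α.symm)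
    refine ⟨fun p => h (indMap α.symm p) + g 0, α,
      ⟨LinearEquiv.ofBijective L hLbij, g 0, fun p => rfl⟩, ?_, horder, ?_⟩
    · have hA : (fun p => h (indMap α.symm p) + g 0) = g ∘ indMap α.symm := by
        funext p
        show g (indMap α.symm p) - g 0 + g 0 = g (indMap α.symm p)
        abel
      rw [hA]
      exact AutProof.isAut_comp G hAut (AutProof.isAut_indMap G hfd α.symm hsymm_order)
    · funext x
      show g x = h (indMap α.symm (indMap α x)) + g 0
      rw [hindsymm]
      show g x = g x - g 0 + g 0
      abel
  · rintro ⟨A, α, haff, hA, hord, rfl⟩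
    exact AutProof.isAut_comp G hA (AutProof.isAut_indMap G hfd α hord)
end

section
/- Let L be a first-order language, let M be a finite L-structure, and let R be an n-ary relation on the universe of M. Then R is definable in M without parameters if and only if R is closed under every automorphism of M (equivalently, every automorphism of M respects R). -/
open FirstOrder

universe u v w

open FirstOrder.Language FirstOrder.Language.Structure

namespace FinDefAux

variable {L : FirstOrder.Language.{u, v}} {M : Type w} [L.Structure M]

/-- Finset-indexed conjunction (the older `BoundedFormula.iInf` interface). -/
noncomputable def fInf {α β : Type*} {k : ℕ} (s : Finset β) (f : β → L.BoundedFormula α k) :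
    L.BoundedFormula α k :=
  BoundedFormula.iInf (fun b : s => f b)

/-- Finset-indexed disjunction (the older `BoundedFormula.iSup` interface). -/
noncomputable def fSup {α β : Type*} {k : ℕ} (s : Finset β) (f : β → L.BoundedFormula α k) :
    L.BoundedFormula α k :=
  BoundedFormula.iSup (fun b : s => f b)

theorem realize_fInf {α β : Type*} {k : ℕ} {s : Finset β} {f : β → L.BoundedFormula α k}
    {v : α → M} {xs : Fin k → M} :
    (fInf s f).Realize v xs ↔ ∀ b ∈ s, (f b).Realize v xs := by
  simp [fInf]

theorem realize_fSup {α β : Type*} {k : ℕ} {s : Finset β} {f : β → L.BoundedFormula α k}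
    {v : α → M} {xs : Fin k → M} :
    (fSup s f).Realize v xs ↔ ∃ b ∈ s, (f b).Realize v xs := by
  simp [fSup]

/-- Key lemma: in a finite structure, if `b` satisfies every formula that `a` satisfies,
then there is an automorphism carrying `a` to `b`. -/
theorem exists_equiv_of_forall_realize [Finite M] {n : ℕ} {a b : Fin n → M}
    (h : ∀ φ : L.Formula (Fin n), φ.Realize a → φ.Realize b) :
    ∃ g : M ≃[L] M, ∀ j, g (a j) = b j := by
  classical
  cases nonempty_fintype M
  -- symbols of the language
  set Symb := (Σ l, L.Functions l) ⊕ (Σ l, L.Relations l) with hSymb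
  -- preservation of a single symbol by a map
  let pres : Symb → (M → M) → Prop := fun s i =>
    match s with
    | Sum.inl ⟨_, f⟩ => ∀ x, i (funMap f x) = funMap f (i ∘ x)
    | Sum.inr ⟨_, r⟩ => ∀ x, RelMap r x ↔ RelMap r (i ∘ x)
  -- Step A: for any finite set of symbols there is an injective map preserving them
  have stepA : ∀ S : Finset Symb, ∃ i : M → M, Function.Injective i ∧
      (∀ j, i (a j) = b j) ∧ ∀ s ∈ S, pres s i := by
    intro S
    -- the diagram formula
    let inj : L.Formula (Fin n ⊕ M) :=
      fInf (Finset.univ.filter (fun p : M × M => p.1 ≠ p.2))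
        (fun p => ∼((Term.var (Sum.inr p.1)).equal (Term.var (Sum.inr p.2))))
    let link : L.Formula (Fin n ⊕ M) :=
      fInf (Finset.univ : Finset (Fin n))
        (fun j => (Term.var (Sum.inl j)).equal (Term.var (Sum.inr (a j))))
    let desc : Symb → L.Formula (Fin n ⊕ M) := fun s =>
      match s with
      | Sum.inl ⟨l, f⟩ =>
          fInf (Finset.univ : Finset (Fin l → M)) (fun x =>
            (Term.var (Sum.inr (funMap f x))).equal
              (Term.func f (fun i => Term.var (Sum.inr (x i)))))
      | Sum.inr ⟨l, r⟩ =>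
          (fInf (Finset.univ.filter (fun x : Fin l → M => RelMap r x))
            (fun x => r.formula (fun i => Term.var (Sum.inr (x i))))) ⊓
          (fInf (Finset.univ.filter (fun x : Fin l → M => ¬ RelMap r x))
            (fun x => ∼(r.formula (fun i => Term.var (Sum.inr (x i))))))
    let θ : L.Formula (Fin n ⊕ M) := (inj ⊓ link) ⊓ fInf S desc
    let Φ : L.Formula (Fin n) := θ.iExs M
    -- a realizes Φ via the identity witness
    have key : ∀ (v : Fin n → M) (i : M → M), θ.Realize (Sum.elim v i) ↔
        (Function.Injective i ∧ (∀ j, v j = i (a j)) ∧ ∀ s ∈ S, pres s i) := by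
      intro v i
      simp only [θ, inj, link, Formula.Realize, BoundedFormula.realize_inf,
        realize_fInf, BoundedFormula.realize_not, Finset.mem_filter,
        Finset.mem_univ, true_and]
      constructor
      · rintro ⟨⟨hinj, hlink⟩, hdesc⟩
        refine ⟨?_, ?_, ?_⟩
        · intro c d hcd
          by_contra hne
          exact hinj (c, d) hne (by simpa [Term.equal, BoundedFormula.Realize] using hcd)
        · intro j
          have := hlink j
          simpa [Term.equal, BoundedFormula.Realize] using this
        · rintro s hs
          have hd := hdesc s hs
          rcases s with ⟨l, f⟩ | ⟨l, r⟩
          · simp only [desc, realize_fInf] at hd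
            intro x
            simpa [Term.equal, BoundedFormula.Realize, Term.realize, Function.comp_def] using
              hd x (Finset.mem_univ _)
          · simp only [desc, BoundedFormula.realize_inf, realize_fInf,
              Finset.mem_filter, Finset.mem_univ, true_and,
              BoundedFormula.realize_not] at hd
            intro x
            constructor
            · intro hx
              have := hd.1 x hx
              simpa [Relations.formula, BoundedFormula.realize_rel, Term.realize, Function.comp_def] using this
            · intro hx
              by_contra hnx
              exact hd.2 x hnx (by simpa [Relations.formula, BoundedFormula.realize_rel, Term.realize,
                Function.comp_def] using hx)
      · rintro ⟨hinj, hlink, hpres⟩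
        refine ⟨⟨?_, ?_⟩, ?_⟩
        · rintro ⟨c, d⟩ hne hcd
          exact hne (hinj (by simpa [Term.equal, BoundedFormula.Realize] using hcd))
        · intro j _
          simpa [Term.equal, BoundedFormula.Realize] using hlink j
        · rintro s hs
          have hp := hpres s hs
          rcases s with ⟨l, f⟩ | ⟨l, r⟩
          · simp only [desc, realize_fInf]
            intro x _
            simpa [Term.equal, BoundedFormula.Realize, Term.realize, Function.comp_def] using hp x
          · simp only [desc, BoundedFormula.realize_inf, realize_fInf,
              Finset.mem_filter, Finset.mem_univ, true_and, BoundedFormula.realize_not]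
            constructor
            · intro x hx
              simpa [Relations.formula, BoundedFormula.realize_rel, Term.realize, Function.comp_def] using (hp x).1 hx
            · intro x hx hcon
              exact hx ((hp x).2 (by simpa [Relations.formula, BoundedFormula.realize_rel, Term.realize,
                Function.comp_def] using hcon))
    have hΦa : Φ.Realize a := by
      rw [Formula.realize_iExs]
      exact ⟨id, by
        have : (fun x => Sum.elim a id (id x)) = Sum.elim a id := by funext x; rfl
        rw [key]
        refine ⟨fun x y hxy => hxy, fun j => rfl, fun s hs => ?_⟩
        rcases s with ⟨l, f⟩ | ⟨l, r⟩
        · intro x; rfl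
        · intro x; rfl⟩
    have hΦb : Φ.Realize b := h Φ hΦa
    rw [Formula.realize_iExs] at hΦb
    obtain ⟨i, hi⟩ := hΦb
    have : (fun x => Sum.elim b i (id x)) = Sum.elim b i := by funext x; rfl
    rw [key] at hi
    exact ⟨i, hi.1, fun j => (hi.2.1 j).symm, hi.2.2⟩
  -- Step B: pigeonhole over the finite set of permutations
  let G : Finset Symb → Finset (Equiv.Perm M) := fun S =>
    Finset.univ.filter (fun g => (∀ j, g (a j) = b j) ∧ ∀ s ∈ S, pres s g)
  have hne : ∀ S, (G S).Nonempty := by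
    intro S
    obtain ⟨i, hinj, hab, hpres⟩ := stepA S
    have hbij : Function.Bijective i := (Finite.injective_iff_bijective).1 hinj
    refine ⟨Equiv.ofBijective i hbij, ?_⟩
    simp only [G, Finset.mem_filter, Finset.mem_univ, true_and]
    exact ⟨fun j => hab j, fun s hs => by
      have := hpres s hs
      rcases s with ⟨l, f⟩ | ⟨l, r⟩ <;> exact this⟩
  -- choose a finite set of symbols minimizing the number of candidate permutations
  let T : Set ℕ := Set.range (fun S => (G S).card)
  have hT : T.Nonempty := ⟨(G ∅).card, ⟨∅, rfl⟩⟩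
  obtain ⟨S0, hS0⟩ : ∃ S, (G S).card = sInf T := Nat.sInf_mem hT
  have hsub : ∀ s : Symb, G (insert s S0) = G S0 := by
    intro s
    have h1 : G (insert s S0) ⊆ G S0 := by
      intro g hg
      simp only [G, Finset.mem_filter, Finset.mem_univ, true_and] at hg ⊢
      exact ⟨hg.1, fun t ht => hg.2 t (Finset.mem_insert_of_mem ht)⟩
    refine Finset.eq_of_subset_of_card_le h1 ?_
    rw [hS0]
    exact Nat.sInf_le ⟨insert s S0, rfl⟩
  obtain ⟨g, hg⟩ := hne S0
  have hgall : (∀ j, g (a j) = b j) ∧ ∀ s : Symb, pres s g := by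
    have hg' : ∀ s : Symb, g ∈ G (insert s S0) := fun s => (hsub s).symm ▸ hg
    simp only [G, Finset.mem_filter, Finset.mem_univ, true_and] at hg hg'
    exact ⟨hg.1, fun s => (hg' s).2 s (Finset.mem_insert_self s S0)⟩
  refine ⟨{ toEquiv := g, map_fun' := ?_, map_rel' := ?_ }, hgall.1⟩
  · intro l f x
    exact hgall.2 (Sum.inl ⟨l, f⟩) x
  · intro l r x
    exact (hgall.2 (Sum.inr ⟨l, r⟩) x).symm

end FinDefAux

/-- **Corollary.** In a finite `L`-structure `M`, an `n`-ary relation `R` on `M` is definable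
without parameters iff `R` is closed under every automorphism of `M`. -/
theorem finite_definable_iff_closed_under_aut
    (L : FirstOrder.Language.{u, v}) (M : Type w) [L.Structure M] [Finite M] (n : ℕ)
    (R : (Fin n → M) → Prop) :
    (∃ φ : L.Formula (Fin n), ∀ a : Fin n → M, R a ↔ φ.Realize a) ↔
      ∀ g : M ≃[L] M, ∀ a : Fin n → M, R a → R fun j => g (a j) := by
  classical
  cases nonempty_fintype M
  constructor
  · rintro ⟨φ, hφ⟩ g a hRa
    rw [hφ]
    have : (fun j => g (a j)) = (g ∘ a) := rfl
    rw [this, StrongHomClass.realize_formula g φ]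
    exact (hφ a).1 hRa
  · intro hclosed
    -- "b satisfies every formula a satisfies"
    let st : (Fin n → M) → (Fin n → M) → Prop := fun a b =>
      ∀ φ : L.Formula (Fin n), φ.Realize a → φ.Realize b
    -- separating formulas
    have hsep : ∀ a b : Fin n → M, ∃ φ : L.Formula (Fin n),
        ¬ st a b → (φ.Realize a ∧ ¬ φ.Realize b) := by
      intro a b
      by_cases hst : st a b
      · exact ⟨⊥, fun hc => absurd hst hc⟩
      · simp only [st, not_forall] at hst
        obtain ⟨φ, hφa, hφb⟩ := hst
        exact ⟨φ, fun _ => ⟨hφa, hφb⟩⟩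
    choose sep hsep using hsep
    -- formula defining the "type class" of a
    let ψ : (Fin n → M) → L.Formula (Fin n) := fun a =>
      FinDefAux.fInf (Finset.univ.filter (fun b : Fin n → M => ¬ st a b)) (sep a)
    have hψ : ∀ a c : Fin n → M, (ψ a).Realize c ↔ st a c := by
      intro a c
      constructor
      · intro hc
        by_contra hnc
        have := hc
        simp only [ψ, Formula.Realize, FinDefAux.realize_fInf, Finset.mem_filter,
          Finset.mem_univ, true_and] at this
        exact (hsep a c hnc).2 (this c hnc)
      · intro hst
        have hψa : (ψ a).Realize a := by
          simp only [ψ, Formula.Realize, FinDefAux.realize_fInf, Finset.mem_filter,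
            Finset.mem_univ, true_and]
          intro b hb
          exact (hsep a b hb).1
        exact hst (ψ a) hψa
    refine ⟨FinDefAux.fSup (Finset.univ.filter (fun a : Fin n → M => R a)) ψ, ?_⟩
    intro c
    constructor
    · intro hRc
      simp only [Formula.Realize, FinDefAux.realize_fSup, Finset.mem_filter,
        Finset.mem_univ, true_and]
      exact ⟨c, hRc, (hψ c c).2 (fun φ h => h)⟩
    · intro hc
      simp only [Formula.Realize, FinDefAux.realize_fSup, Finset.mem_filter,
        Finset.mem_univ, true_and] at hc
      obtain ⟨a, hRa, hac⟩ := hc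
      have hst : st a c := (hψ a c).1 hac
      obtain ⟨g, hg⟩ := FinDefAux.exists_equiv_of_forall_realize hst
      have := hclosed g a hRa
      have heq : (fun j => g (a j)) = c := funext hg
      rwa [heq] at this
end
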